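/- arXiv:2509.09885 — 4 statements merged into one kernel-verified Lean document; each statement's English description precedes it below -/
import Mathlib

section
/- For every ε > 0 there exists a constant C_ε > 0 such that the following uncertainty principle holds: for every squarefree positive integer N and every nonzero function f : (ℤ/Nℤ)² → ℂ that is supported in a set E ⊆ (ℤ/Nℤ)² and whose Fourier transform f̂ is supported in the parabola Σ = {(t, t²) : t ∈ ℤ/Nℤ}, one has |E| ≥ N^{2−2ε} / C_ε⁸. -/
open scoped BigOperators

set_option linter.unusedSectionVars false
set_option maxHeartbeats 1000000

/-- Normalized Fourier transform on `(ℤ/Nℤ)²`: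
`f̂(m) = N⁻¹ ∑ₓ f(x) e^{-2πi (x·m)/N}` where `x·m = x₁m₁ + x₂m₂`. -/
noncomputable def dft (N : ℕ) [NeZero N] (f : ZMod N × ZMod N → ℂ)
    (m : ZMod N × ZMod N) : ℂ :=
  (N : ℂ)⁻¹ * ∑ x : ZMod N × ZMod N,
    f x * Complex.exp (-2 * Real.pi * Complex.I *
      (((x.1 * m.1 + x.2 * m.2).val : ℕ) : ℂ) / (N : ℂ))

/-- The parabola `Σ = {(t, t²) : t ∈ ℤ/Nℤ}` in `(ℤ/Nℤ)²`. -/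
def parabola (N : ℕ) [NeZero N] : Finset (ZMod N × ZMod N) :=
  Finset.univ.image (fun t : ZMod N => (t, t ^ 2))

namespace UncertaintyAux

open Finset

variable (N : ℕ) [NeZero N]

noncomputable def phi (a : ZMod N) : ℂ :=
  Complex.exp (2 * Real.pi * Complex.I * (a.val : ℂ) / N)

lemma phi_int (n : ℤ) :
    Complex.exp (2 * Real.pi * Complex.I * (n : ℂ) / N) = phi N (n : ZMod N) := by
  set a : ZMod N := (n : ZMod N)
  have hdvd : (N : ℤ) ∣ n - (a.val : ℤ) := by
    have : ((n - (a.val : ℤ) : ℤ) : ZMod N) = 0 := by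
      push_cast
      simp [a, ZMod.natCast_val, ZMod.cast_id]
    exact (ZMod.intCast_zmod_eq_zero_iff_dvd _ _).mp this
  obtain ⟨k, hk⟩ := hdvd
  have hn : (n : ℂ) = (a.val : ℂ) + N * k := by
    have : (n : ℤ) = (a.val : ℤ) + N * k := by linarith
    exact_mod_cast congrArg (Int.cast : ℤ → ℂ) this
  rw [hn]
  have hNne : (N : ℂ) ≠ 0 := Nat.cast_ne_zero.mpr (NeZero.ne N)
  have : 2 * (Real.pi:ℂ) * Complex.I * ((a.val : ℂ) + N * k) / N
      = 2 * (Real.pi:ℂ) * Complex.I * (a.val : ℂ) / N + k * (2 * Real.pi * Complex.I) := by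
    field_simp
  rw [this, Complex.exp_add, Complex.exp_int_mul_two_pi_mul_I, mul_one, phi]

lemma phi_of_eq_intCast (a : ZMod N) (n : ℤ) (h : (n : ZMod N) = a) :
    phi N a = Complex.exp (2 * Real.pi * Complex.I * (n : ℂ) / N) := by
  rw [phi_int]; rw [h]

lemma phi_conj (a : ZMod N) : (starRingEnd ℂ) (phi N a) = phi N (-a) := by
  rw [phi_of_eq_intCast N (-a) (-(a.val : ℤ)) (by push_cast; simp), phi, ← Complex.exp_conj]
  congr 1
  set v := a.val with hv
  have h2 : (starRingEnd ℂ) 2 = 2 := by simp [Complex.ext_iff]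
  simp [map_div₀, Complex.conj_I, h2]

lemma phi_eq_one_iff (a : ZMod N) : phi N a = 1 ↔ a = 0 := by
  constructor
  · intro h
    rw [phi, Complex.exp_eq_one_iff] at h
    obtain ⟨k, hk⟩ := h
    set v := a.val with hv
    have h2 : (2 * (Real.pi:ℂ) * Complex.I) ≠ 0 := by
      simp [Real.pi_ne_zero, Complex.I_ne_zero]
    have hNne : (N : ℂ) ≠ 0 := Nat.cast_ne_zero.mpr (NeZero.ne N)
    have hvc : (v : ℂ) = k * N := by
      field_simp at hk
      apply mul_left_cancel₀ h2
      rw [hk]; ring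
    have hvz : (v : ℤ) = k * N := by exact_mod_cast hvc
    have hlt : v < N := ZMod.val_lt a
    have hdvd : (N:ℕ) ∣ v := by
      have : (N:ℤ) ∣ (v : ℤ) := ⟨k, by linarith⟩
      exact_mod_cast this
    have hv0 : v = 0 := Nat.eq_zero_of_dvd_of_lt hdvd hlt
    exact (ZMod.val_eq_zero a).mp hv0
  · intro h; subst h; simp [phi]

lemma phi_add (a b : ZMod N) : phi N (a + b) = phi N a * phi N b := by
  rw [phi_of_eq_intCast N (a+b) ((a.val : ℤ) + b.val) (by push_cast; simp),
      phi_of_eq_intCast N a (a.val : ℤ) (by push_cast; simp),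
      phi_of_eq_intCast N b (b.val : ℤ) (by push_cast; simp), ← Complex.exp_add]
  congr 1
  have hNne : (N : ℂ) ≠ 0 := Nat.cast_ne_zero.mpr (NeZero.ne N)
  field_simp
  push_cast
  ring

lemma phi_zero : phi N 0 = 1 := by simp [phi]

lemma sum_phi (m : ZMod N) : ∑ x : ZMod N, phi N (x * m) = if m = 0 then (N : ℂ) else 0 := by
  split_ifs with h
  · subst h; simp [phi_zero, mul_comm]
  · have key : phi N m * ∑ x : ZMod N, phi N (x * m) = ∑ x : ZMod N, phi N (x * m) := by
      rw [Finset.mul_sum]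
      rw [← Equiv.sum_comp (Equiv.addLeft (1 : ZMod N)) (fun x => phi N (x * m))]
      apply Finset.sum_congr rfl
      intro x _
      simp only [Equiv.coe_addLeft]
      rw [add_mul, one_mul, phi_add]
    have hne : phi N m ≠ 1 := fun hc => h ((phi_eq_one_iff N m).mp hc)
    by_contra hS
    exact hne (mul_right_cancel₀ hS (key.trans (one_mul _).symm))

noncomputable def cc (m x : ZMod N × ZMod N) : ℂ := phi N (x.1 * m.1 + x.2 * m.2)

lemma cc_add (m m' x : ZMod N × ZMod N) : cc N (m + m') x = cc N m x * cc N m' x := by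
  rw [cc, cc, cc, ← phi_add]
  congr 1
  simp [Prod.fst_add, Prod.snd_add]
  ring

lemma cc_conj (m x : ZMod N × ZMod N) : (starRingEnd ℂ) (cc N m x) = cc N (-m) x := by
  rw [cc, phi_conj, cc]
  congr 1
  simp
  ring

lemma sum_cc (m : ZMod N × ZMod N) :
    ∑ x : ZMod N × ZMod N, cc N m x = if m = 0 then ((N : ℂ))^2 else 0 := by
  rw [Fintype.sum_prod_type]
  have : ∀ x1 x2 : ZMod N, cc N m (x1, x2) = phi N (x1 * m.1) * phi N (x2 * m.2) := by
    intro x1 x2; rw [cc, ← phi_add]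
  simp_rw [this]
  rw [← Finset.sum_mul_sum]
  rw [sum_phi, sum_phi]
  rcases eq_or_ne m 0 with h | h
  · subst h; simp; ring
  · have : m.1 ≠ 0 ∨ m.2 ≠ 0 := by
      by_contra hc
      push_neg at hc
      exact h (Prod.ext hc.1 hc.2)
    rcases this with h1 | h1 <;> simp [h1, h]

lemma exp_neg_val (u : ZMod N) :
    Complex.exp (-2 * Real.pi * Complex.I * (u.val : ℂ) / N) = phi N (-u) := by
  rw [phi_of_eq_intCast N (-u) (-(u.val : ℤ)) (by push_cast; simp)]
  congr 1
  push_cast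
  ring

lemma dft_eq (f : ZMod N × ZMod N → ℂ) (m : ZMod N × ZMod N) :
    dft N f m = (N : ℂ)⁻¹ * ∑ x : ZMod N × ZMod N, f x * cc N (-m) x := by
  rw [dft]
  congr 1
  apply Finset.sum_congr rfl
  intro x _
  rw [exp_neg_val, cc]
  congr 2
  simp
  ring

lemma cc_symm (m x : ZMod N × ZMod N) : cc N m x = cc N x m := by
  rw [cc, cc]; congr 1; ring

lemma inversion (f : ZMod N × ZMod N → ℂ) (x : ZMod N × ZMod N) :
    (N : ℂ)⁻¹ * ∑ m : ZMod N × ZMod N, dft N f m * cc N m x = f x := by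
  have hNne : (N : ℂ) ≠ 0 := Nat.cast_ne_zero.mpr (NeZero.ne N)
  have step : ∀ m : ZMod N × ZMod N, dft N f m * cc N m x
      = (N : ℂ)⁻¹ * ∑ y : ZMod N × ZMod N, f y * cc N (x - y) m := by
    intro m
    rw [dft_eq, mul_assoc, Finset.sum_mul]
    congr 1
    apply Finset.sum_congr rfl
    intro y _
    rw [mul_assoc]
    congr 1
    rw [cc, cc, cc, ← phi_add]
    congr 1
    simp only [Prod.fst_neg, Prod.snd_neg, Prod.fst_sub, Prod.snd_sub]
    ring
  simp_rw [step]
  rw [← Finset.mul_sum, Finset.sum_comm]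
  have inner : ∀ y : ZMod N × ZMod N,
      (∑ m : ZMod N × ZMod N, f y * cc N (x - y) m)
      = if y = x then f y * (N:ℂ)^2 else 0 := by
    intro y
    rw [← Finset.mul_sum]
    rw [sum_cc]
    rcases eq_or_ne y x with h | h
    · subst h; simp
    · have : x - y ≠ 0 := fun hc => h (by rw [sub_eq_zero] at hc; exact hc.symm)
      simp [this, h]
  simp_rw [inner]
  rw [Finset.sum_ite_eq' Finset.univ x (fun y => f y * (N:ℂ)^2)]
  rw [if_pos (Finset.mem_univ x)]
  field_simp

def sig (t : ZMod N) : ZMod N × ZMod N := (t, t ^ 2)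

lemma sig_inj : Function.Injective (sig N) := fun a b h => congrArg Prod.fst h

section FF
variable (a : ZMod N → ℂ)

noncomputable def FF (x : ZMod N × ZMod N) : ℂ := ∑ t : ZMod N, a t * cc N (sig N t) x

lemma expand1 (x : ZMod N × ZMod N) :
    FF N a x * (starRingEnd ℂ) (FF N a x)
    = ∑ p : ZMod N × ZMod N, (a p.1 * (starRingEnd ℂ) (a p.2)) * cc N (sig N p.1 - sig N p.2) x := by
  rw [FF, map_sum]
  simp_rw [map_mul, cc_conj]
  rw [Finset.sum_mul_sum]
  rw [Fintype.sum_prod_type]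
  apply Finset.sum_congr rfl; intro t _
  apply Finset.sum_congr rfl; intro s _
  rw [sub_eq_add_neg, cc_add]
  ring

lemma P2 : ∑ x : ZMod N × ZMod N, FF N a x * (starRingEnd ℂ) (FF N a x)
    = (N:ℂ)^2 * ∑ t : ZMod N, a t * (starRingEnd ℂ) (a t) := by
  simp_rw [expand1]
  rw [Finset.sum_comm]
  have : ∀ p : ZMod N × ZMod N,
      ∑ x : ZMod N × ZMod N, (a p.1 * (starRingEnd ℂ) (a p.2)) * cc N (sig N p.1 - sig N p.2) x
      = if p.2 = p.1 then (a p.1 * (starRingEnd ℂ) (a p.2)) * (N:ℂ)^2 else 0 := by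
    intro p
    rw [← Finset.mul_sum, sum_cc]
    rcases eq_or_ne p.2 p.1 with h | h
    · rw [if_pos h, if_pos (by rw [h, sub_self])]
    · rw [if_neg h, if_neg, mul_zero]
      intro hc
      exact h (sig_inj N (by rwa [sub_eq_zero] at hc)).symm
  simp_rw [this]
  rw [Fintype.sum_prod_type]
  simp_rw [Finset.sum_ite_eq' Finset.univ]
  simp only [Finset.mem_univ, if_true]
  rw [Finset.mul_sum]
  apply Finset.sum_congr rfl; intro t _
  ring

lemma expand2 (x : ZMod N × ZMod N) :
    (FF N a x * (starRingEnd ℂ) (FF N a x)) * (FF N a x * (starRingEnd ℂ) (FF N a x))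
    = ∑ q : (ZMod N × ZMod N) × (ZMod N × ZMod N),
        ((a q.1.1 * (starRingEnd ℂ) (a q.1.2)) * (a q.2.1 * (starRingEnd ℂ) (a q.2.2)))
          * cc N ((sig N q.1.1 - sig N q.1.2) + (sig N q.2.1 - sig N q.2.2)) x := by
  rw [expand1, Finset.sum_mul_sum]
  conv_rhs => rw [Fintype.sum_prod_type]
  apply Finset.sum_congr rfl; intro p _
  apply Finset.sum_congr rfl; intro r _
  rw [cc_add]
  ring

lemma P4 : ∑ x : ZMod N × ZMod N,
      (FF N a x * (starRingEnd ℂ) (FF N a x)) * (FF N a x * (starRingEnd ℂ) (FF N a x))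
    = (N:ℂ)^2 * ∑ q ∈ Finset.univ.filter
        (fun q : (ZMod N × ZMod N) × (ZMod N × ZMod N) =>
          sig N q.1.1 + sig N q.2.1 = sig N q.1.2 + sig N q.2.2),
        ((a q.1.1 * (starRingEnd ℂ) (a q.1.2)) * (a q.2.1 * (starRingEnd ℂ) (a q.2.2))) := by
  simp_rw [expand2]
  rw [Finset.sum_comm]
  have : ∀ q : (ZMod N × ZMod N) × (ZMod N × ZMod N),
      ∑ x : ZMod N × ZMod N,
        ((a q.1.1 * (starRingEnd ℂ) (a q.1.2)) * (a q.2.1 * (starRingEnd ℂ) (a q.2.2)))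
          * cc N ((sig N q.1.1 - sig N q.1.2) + (sig N q.2.1 - sig N q.2.2)) x
      = if sig N q.1.1 + sig N q.2.1 = sig N q.1.2 + sig N q.2.2 then
          ((a q.1.1 * (starRingEnd ℂ) (a q.1.2)) * (a q.2.1 * (starRingEnd ℂ) (a q.2.2))) * (N:ℂ)^2
        else 0 := by
    intro q
    rw [← Finset.mul_sum, sum_cc]
    have hiff : (sig N q.1.1 - sig N q.1.2) + (sig N q.2.1 - sig N q.2.2) = 0
        ↔ sig N q.1.1 + sig N q.2.1 = sig N q.1.2 + sig N q.2.2 := by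
      constructor <;> intro h <;> linear_combination h
    rcases eq_or_ne ((sig N q.1.1 - sig N q.1.2) + (sig N q.2.1 - sig N q.2.2)) 0 with h | h
    · rw [if_pos h, if_pos (hiff.mp h)]
    · rw [if_neg h, if_neg (fun hc => h (hiff.mpr hc)), mul_zero]
  simp_rw [this]
  rw [← Finset.sum_filter, Finset.mul_sum]
  apply Finset.sum_congr rfl; intro q _
  ring

end FF


lemma card_quad_roots_field {F : Type*} [Field F] (a b c : F) (ha : a ≠ 0) :
    Nat.card {x : F | a * x ^ 2 + b * x + c = 0} ≤ 2 := by
  classical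
  set q : Polynomial F := Polynomial.C a * Polynomial.X ^ 2 + Polynomial.C b * Polynomial.X
      + Polynomial.C c with hq
  have hdeg : q.natDegree = 2 := Polynomial.natDegree_quadratic ha
  have hq0 : q ≠ 0 := fun h => by simp [h] at hdeg
  have hsub : {x : F | a * x ^ 2 + b * x + c = 0} ⊆ ↑q.roots.toFinset := by
    intro x hx
    simp only [Multiset.mem_toFinset, Finset.coe_sort_coe, Finset.mem_coe]
    rw [Polynomial.mem_roots hq0]
    simp only [Polynomial.IsRoot, hq, Polynomial.eval_add, Polynomial.eval_mul,
      Polynomial.eval_pow, Polynomial.eval_C, Polynomial.eval_X]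
    exact hx
  calc Nat.card {x : F | a * x ^ 2 + b * x + c = 0}
      = ({x : F | a * x ^ 2 + b * x + c = 0} : Set F).ncard := (Nat.card_coe_set_eq _)
    _ ≤ (↑q.roots.toFinset : Set F).ncard := Set.ncard_le_ncard hsub (q.roots.toFinset.finite_toSet)
    _ = q.roots.toFinset.card := Set.ncard_coe_finset _
    _ ≤ Multiset.card q.roots := Multiset.toFinset_card_le _
    _ ≤ q.natDegree := Polynomial.card_roots' q
    _ = 2 := hdeg

lemma QRp (p : ℕ) (hp : p.Prime) (b c : ℤ) :
    Nat.card {t : ZMod p | (2 : ZMod p) * t ^ 2 + (b : ZMod p) * t + (c : ZMod p) = 0} ≤ 2 := by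
  haveI := Fact.mk hp
  rcases eq_or_ne p 2 with h2 | h2
  · subst h2
    calc Nat.card {t : ZMod 2 | (2 : ZMod 2) * t ^ 2 + (b : ZMod 2) * t + (c : ZMod 2) = 0}
        = ({t : ZMod 2 | _} : Set (ZMod 2)).ncard := Nat.card_coe_set_eq _
      _ ≤ (Set.univ : Set (ZMod 2)).ncard := Set.ncard_le_ncard (Set.subset_univ _) Set.finite_univ
      _ = Nat.card (ZMod 2) := Set.ncard_univ _
      _ = 2 := by rw [Nat.card_eq_fintype_card, ZMod.card]
  · apply card_quad_roots_field
    intro hc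
    have : ((2 : ℕ) : ZMod p) = 0 := by exact_mod_cast hc
    rw [ZMod.natCast_eq_zero_iff] at this
    exact h2 ((Nat.prime_dvd_prime_iff_eq hp Nat.prime_two).mp this)

lemma QR_step (b c : ℤ) (p m : ℕ) (hm0 : m ≠ 0) (hp : p.Prime) (hcop : p.Coprime m) :
    Nat.card {t : ZMod (p * m) | (2 : ZMod (p * m)) * t ^ 2 + (b : ZMod (p * m)) * t
        + (c : ZMod (p * m)) = 0}
      ≤ Nat.card {t : ZMod p | (2 : ZMod p) * t ^ 2 + (b : ZMod p) * t + (c : ZMod p) = 0}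
        * Nat.card {t : ZMod m | (2 : ZMod m) * t ^ 2 + (b : ZMod m) * t + (c : ZMod m) = 0} := by
  haveI : NeZero m := ⟨hm0⟩
  haveI : NeZero p := ⟨hp.ne_zero⟩
  set e := ZMod.chineseRemainder hcop with he
  rw [← Nat.card_prod]
  haveI : Finite ({t : ZMod p | (2 : ZMod p) * t ^ 2 + (b : ZMod p) * t + (c : ZMod p) = 0} ×
      {t : ZMod m | (2 : ZMod m) * t ^ 2 + (b : ZMod m) * t + (c : ZMod m) = 0}) := by
    infer_instance
  apply Nat.card_le_card_of_injective
    (f := fun t => (⟨(e t.1).1, by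
        obtain ⟨t, ht⟩ := t
        have h0 : e ((2 : ZMod (p*m)) * t ^ 2 + (b : ZMod (p*m)) * t + (c : ZMod (p*m))) = 0 := by
          rw [ht, map_zero]
        rw [map_add, map_add, map_mul, map_mul, map_pow, map_intCast, map_intCast,
          map_ofNat] at h0
        have := congrArg Prod.fst h0
        simpa using this⟩,
      ⟨(e t.1).2, by
        obtain ⟨t, ht⟩ := t
        have h0 : e ((2 : ZMod (p*m)) * t ^ 2 + (b : ZMod (p*m)) * t + (c : ZMod (p*m))) = 0 := by
          rw [ht, map_zero]
        rw [map_add, map_add, map_mul, map_mul, map_pow, map_intCast, map_intCast,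
          map_ofNat] at h0
        have := congrArg Prod.snd h0
        simpa using this⟩))
  intro t1 t2 h
  have h1 : (e t1.1).1 = (e t2.1).1 := congrArg (fun z => (z.1 : ZMod p)) h
  have h2 : (e t1.1).2 = (e t2.1).2 := congrArg (fun z => (z.2 : ZMod m)) h
  have : e t1.1 = e t2.1 := Prod.ext h1 h2
  exact Subtype.ext (e.injective this)



lemma QR (b c : ℤ) : ∀ n : ℕ, Squarefree n →
    Nat.card {t : ZMod n | (2 : ZMod n) * t ^ 2 + (b : ZMod n) * t + (c : ZMod n) = 0}
      ≤ 2 ^ n.primeFactors.card := by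
  intro n
  induction n using Nat.strong_induction_on with
  | _ n ih =>
    intro hsf
    have hn0 : n ≠ 0 := hsf.ne_zero
    rcases eq_or_ne n 1 with h1 | h1
    · subst h1
      have hle : Nat.card {t : ZMod 1 | (2 : ZMod 1) * t ^ 2 + (b : ZMod 1) * t + (c : ZMod 1) = 0}
          ≤ Nat.card (ZMod 1) := Nat.card_le_card_of_injective Subtype.val Subtype.val_injective
      simpa using hle
    · set p := n.minFac with hp_def
      have hp : p.Prime := Nat.minFac_prime h1
      obtain ⟨m, hm⟩ : p ∣ n := n.minFac_dvd
      have hm0 : m ≠ 0 := by rintro rfl; simp [hm] at hn0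
      have hpm : ¬ p ∣ m := by
        intro hdvd
        obtain ⟨k, hk⟩ := hdvd
        have : p * p ∣ n := ⟨k, by rw [hm, hk]; ring⟩
        exact hp.not_isUnit (hsf p this)
      have hcop : p.Coprime m := (Nat.Prime.coprime_iff_not_dvd hp).mpr hpm
      have hmlt : m < n := by
        have h2 : 2 ≤ p := hp.two_le
        calc m < 2 * m := by omega
          _ ≤ p * m := Nat.mul_le_mul_right m h2
          _ = n := hm.symm
      have hsfm : Squarefree m := hsf.squarefree_of_dvd ⟨p, by rw [hm]; ring⟩
      have IH := ih m hmlt hsfm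
      have hfac : n.primeFactors.card = m.primeFactors.card + 1 := by
        rw [hm, Nat.Coprime.primeFactors_mul hcop, hp.primeFactors]
        rw [Finset.card_union_of_disjoint]
        · simp [add_comm]
        · simp only [Finset.disjoint_singleton_left]
          intro hmem
          exact hpm (Nat.dvd_of_mem_primeFactors hmem)
      calc Nat.card {t : ZMod n | (2 : ZMod n) * t ^ 2 + (b : ZMod n) * t + (c : ZMod n) = 0}
          = Nat.card {t : ZMod (p * m) | (2 : ZMod (p * m)) * t ^ 2 + (b : ZMod (p * m)) * t
              + (c : ZMod (p * m)) = 0} := by rw [← hm]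
        _ ≤ Nat.card {t : ZMod p | (2 : ZMod p) * t ^ 2 + (b : ZMod p) * t + (c : ZMod p) = 0}
            * Nat.card {t : ZMod m | (2 : ZMod m) * t ^ 2 + (b : ZMod m) * t + (c : ZMod m) = 0} :=
            QR_step b c p m hm0 hp hcop
        _ ≤ 2 * 2 ^ m.primeFactors.card := Nat.mul_le_mul (QRp p hp b c) IH
        _ = 2 ^ n.primeFactors.card := by rw [hfac, pow_succ]; ring



lemma CL (N : ℕ) [NeZero N] (hsf : Squarefree N) (u : ZMod N × ZMod N) :
    (Finset.univ.filter (fun pr : ZMod N × ZMod N => sig N pr.1 + sig N pr.2 = u)).card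
      ≤ 2 ^ N.primeFactors.card := by
  classical
  set B : ℤ := -2 * (u.1.val : ℤ) with hB_def
  set C : ℤ := (u.1.val : ℤ) ^ 2 - (u.2.val : ℤ) with hC_def
  have huv1 : ((u.1.val : ℕ) : ZMod N) = u.1 := by rw [ZMod.natCast_val, ZMod.cast_id]
  have huv2 : ((u.2.val : ℕ) : ZMod N) = u.2 := by rw [ZMod.natCast_val, ZMod.cast_id]
  have hB : ((B : ℤ) : ZMod N) = -2 * u.1 := by rw [hB_def]; push_cast; rw [huv1]
  have hC : ((C : ℤ) : ZMod N) = u.1 ^ 2 - u.2 := by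
    rw [hC_def]; push_cast; rw [huv1, huv2]
  have stepA : (Finset.univ.filter (fun pr : ZMod N × ZMod N => sig N pr.1 + sig N pr.2 = u)).card
      ≤ (Finset.univ.filter (fun t : ZMod N =>
          (2 : ZMod N) * t ^ 2 + (B : ZMod N) * t + (C : ZMod N) = 0)).card := by
    apply Finset.card_le_card_of_injOn (fun pr => pr.1)
    · intro pr hpr
      rw [Finset.mem_coe, Finset.mem_filter] at hpr ⊢
      refine ⟨Finset.mem_univ _, ?_⟩
      have e1 : pr.1 + pr.2 = u.1 := congrArg Prod.fst hpr.2
      have e2 : pr.1 ^ 2 + pr.2 ^ 2 = u.2 := congrArg Prod.snd hpr.2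
      rw [hB, hC]
      linear_combination (pr.1 - pr.2 - u.1) * e1 + e2
    · intro p1 hp1 p2 hp2 heq
      simp only [Finset.coe_filter, Set.mem_setOf_eq] at hp1 hp2
      have e1 : p1.1 + p1.2 = u.1 := congrArg Prod.fst hp1.2
      have e2 : p2.1 + p2.2 = u.1 := congrArg Prod.fst hp2.2
      have heq' : p1.1 = p2.1 := heq
      have : p1.2 = p2.2 := by
        have h' : p1.1 + p1.2 = p2.1 + p2.2 := e1.trans e2.symm
        rw [heq'] at h'
        exact add_left_cancel h'
      exact Prod.ext heq' this
  have stepB : (Finset.univ.filter (fun t : ZMod N =>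
      (2 : ZMod N) * t ^ 2 + (B : ZMod N) * t + (C : ZMod N) = 0)).card
      = Nat.card {t : ZMod N |
          (2 : ZMod N) * t ^ 2 + (B : ZMod N) * t + (C : ZMod N) = 0} := by
    rw [Nat.card_coe_set_eq, Set.ncard_eq_toFinset_card', Set.toFinset_setOf]
  exact stepA.trans (stepB ▸ QR B C N hsf)

lemma count_sum {α β : Type*} [Fintype α] [Fintype β] (P : α → β → Prop)
    [∀ a b, Decidable (P a b)] (w : α → ℝ) (hw : ∀ p, 0 ≤ w p) (R : ℕ)
    (hc : ∀ a, (Finset.univ.filter (fun b => P a b)).card ≤ R) :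
    ∑ q ∈ Finset.univ.filter (fun q : α × β => P q.1 q.2), w q.1 ≤ R * ∑ a, w a := by
  rw [Finset.sum_filter, Fintype.sum_prod_type]
  have key : ∀ a, (∑ b, if P a b then w a else 0)
      = ((Finset.univ.filter (fun b => P a b)).card : ℝ) * w a := by
    intro a
    rw [← Finset.sum_filter, Finset.sum_const, nsmul_eq_mul]
  simp_rw [key]
  rw [Finset.mul_sum]
  apply Finset.sum_le_sum
  intro a _
  exact mul_le_mul_of_nonneg_right (by exact_mod_cast hc a) (hw a)

lemma count_sum' {α β : Type*} [Fintype α] [Fintype β] (P : α → β → Prop)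
    [∀ a b, Decidable (P a b)] (w : β → ℝ) (hw : ∀ p, 0 ≤ w p) (R : ℕ)
    (hc : ∀ b, (Finset.univ.filter (fun a => P a b)).card ≤ R) :
    ∑ q ∈ Finset.univ.filter (fun q : α × β => P q.1 q.2), w q.2 ≤ R * ∑ b, w b := by
  have swap : ∑ q ∈ Finset.univ.filter (fun q : α × β => P q.1 q.2), w q.2
      = ∑ q ∈ Finset.univ.filter (fun q : β × α => P q.2 q.1), w q.1 := by
    apply Finset.sum_equiv (Equiv.prodComm α β)
    · intro q; simp
    · intro q _; rfl
  rw [swap]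
  exact count_sum (fun b a => P a b) w hw R hc





lemma Zbound (N : ℕ) [NeZero N] (hsf : Squarefree N) (a : ZMod N → ℂ) :
    ∑ q ∈ Finset.univ.filter (fun q : (ZMod N × ZMod N) × (ZMod N × ZMod N) =>
        sig N q.1.1 + sig N q.2.1 = sig N q.1.2 + sig N q.2.2),
      ‖a q.1.1‖ * ‖a q.1.2‖ * ‖a q.2.1‖ * ‖a q.2.2‖
    ≤ (2 ^ N.primeFactors.card : ℝ) * (∑ t : ZMod N, ‖a t‖^2)^2 := by
  classical
  set R : ℕ := 2 ^ N.primeFactors.card with hR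
  set P : (ZMod N × ZMod N) → (ZMod N × ZMod N) → Prop :=
    fun x y => sig N x.1 + sig N x.2 = sig N y.1 + sig N y.2 with hP
  set w : ZMod N × ZMod N → ℝ := fun x => ‖a x.1‖^2 * ‖a x.2‖^2 with hw_def
  have hw : ∀ p, 0 ≤ w p := fun p => mul_nonneg (sq_nonneg _) (sq_nonneg _)
  have reindex : ∑ q ∈ Finset.univ.filter (fun q : (ZMod N × ZMod N) × (ZMod N × ZMod N) =>
        sig N q.1.1 + sig N q.2.1 = sig N q.1.2 + sig N q.2.2),
      ‖a q.1.1‖ * ‖a q.1.2‖ * ‖a q.2.1‖ * ‖a q.2.2‖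
      = ∑ q ∈ Finset.univ.filter (fun q : (ZMod N × ZMod N) × (ZMod N × ZMod N) => P q.1 q.2),
          (‖a q.1.1‖ * ‖a q.1.2‖) * (‖a q.2.1‖ * ‖a q.2.2‖) := by
    apply Finset.sum_equiv (Equiv.prodProdProdComm (ZMod N) (ZMod N) (ZMod N) (ZMod N))
    · rintro ⟨⟨t1, s1⟩, t2, s2⟩
      simp [hP, Equiv.prodProdProdComm_apply]
    · rintro ⟨⟨t1, s1⟩, t2, s2⟩ _
      simp [Equiv.prodProdProdComm_apply]
      ring
  rw [reindex]
  have hc1 : ∀ x : ZMod N × ZMod N,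
      (Finset.univ.filter (fun y : ZMod N × ZMod N => P x y)).card ≤ R := by
    intro x
    have : (Finset.univ.filter (fun y : ZMod N × ZMod N => P x y))
        = (Finset.univ.filter (fun y : ZMod N × ZMod N =>
            sig N y.1 + sig N y.2 = sig N x.1 + sig N x.2)) := by
      apply Finset.filter_congr
      intro y _
      simp [hP, eq_comm]
    rw [this]
    exact CL N hsf _
  have hc2 : ∀ y : ZMod N × ZMod N,
      (Finset.univ.filter (fun x : ZMod N × ZMod N => P x y)).card ≤ R := by
    intro y
    exact CL N hsf _
  have amgm : ∀ q ∈ Finset.univ.filter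
      (fun q : (ZMod N × ZMod N) × (ZMod N × ZMod N) => P q.1 q.2),
      (‖a q.1.1‖ * ‖a q.1.2‖) * (‖a q.2.1‖ * ‖a q.2.2‖) ≤ (w q.1 + w q.2) / 2 := by
    intro q _
    have h := two_mul_le_add_sq (‖a q.1.1‖ * ‖a q.1.2‖) (‖a q.2.1‖ * ‖a q.2.2‖)
    have : w q.1 = (‖a q.1.1‖ * ‖a q.1.2‖)^2 := by rw [hw_def]; ring
    have h2 : w q.2 = (‖a q.2.1‖ * ‖a q.2.2‖)^2 := by rw [hw_def]; ring
    rw [this, h2]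
    nlinarith [h]
  calc ∑ q ∈ Finset.univ.filter (fun q : (ZMod N × ZMod N) × (ZMod N × ZMod N) => P q.1 q.2),
        (‖a q.1.1‖ * ‖a q.1.2‖) * (‖a q.2.1‖ * ‖a q.2.2‖)
      ≤ ∑ q ∈ Finset.univ.filter (fun q : (ZMod N × ZMod N) × (ZMod N × ZMod N) => P q.1 q.2),
        (w q.1 + w q.2) / 2 := Finset.sum_le_sum amgm
    _ = (∑ q ∈ Finset.univ.filter (fun q : (ZMod N × ZMod N) × (ZMod N × ZMod N) => P q.1 q.2),
          w q.1 + ∑ q ∈ Finset.univ.filter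
            (fun q : (ZMod N × ZMod N) × (ZMod N × ZMod N) => P q.1 q.2), w q.2) / 2 := by
        rw [← Finset.sum_add_distrib, Finset.sum_div]
    _ ≤ ((R : ℝ) * ∑ x, w x + (R : ℝ) * ∑ x, w x) / 2 := by
        have g1 := count_sum P w hw R hc1
        have g2 := count_sum' P w hw R hc2
        linarith
    _ = (R : ℝ) * ∑ x : ZMod N × ZMod N, w x := by ring
    _ = (R : ℝ) * (∑ t : ZMod N, ‖a t‖^2)^2 := by
        congr 1
        rw [Fintype.sum_prod_type, sq, Finset.sum_mul_sum]
    _ = (2 ^ N.primeFactors.card : ℝ) * (∑ t : ZMod N, ‖a t‖^2)^2 := by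
        rw [hR]; push_cast; ring

lemma omega_bound (ε : ℝ) (hε : 0 < ε) : ∃ C : ℝ, 1 ≤ C ∧ ∀ N : ℕ, Squarefree N →
    ((2:ℝ) ^ N.primeFactors.card) ≤ C * (N:ℝ) ^ (2*ε) := by
  set K : ℕ := ⌈(2:ℝ) ^ ((1:ℝ)/(2*ε))⌉₊ with hK
  refine ⟨2 ^ (K+1), one_le_pow₀ (by norm_num), ?_⟩
  intro N hsf
  have hε2 : (0:ℝ) ≤ 2 * ε := by linarith
  set P := N.primeFactors with hP
  set S := P.filter (fun p => p ≤ K) with hS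
  set L := P.filter (fun p => ¬ p ≤ K) with hL
  have hcard : S.card + L.card = P.card := Finset.card_filter_add_card_filter_not _
  have hSle : S.card ≤ K + 1 := by
    have : S ⊆ Finset.range (K+1) := by
      intro p hp
      rw [Finset.mem_range]
      have := (Finset.mem_filter.mp hp).2
      omega
    simpa using Finset.card_le_card this
  have hLle : (2:ℝ) ^ L.card ≤ ∏ p ∈ L, (p:ℝ) ^ (2*ε) := by
    rw [← Finset.prod_const]
    apply Finset.prod_le_prod (fun _ _ => by norm_num)
    intro p hp
    have hpK : K < p := by
      have := (Finset.mem_filter.mp hp).2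
      omega
    have hbase : (2:ℝ) ^ ((1:ℝ)/(2*ε)) ≤ (p:ℝ) := by
      calc (2:ℝ) ^ ((1:ℝ)/(2*ε)) ≤ (K:ℝ) := Nat.le_ceil _ |>.trans (by exact_mod_cast le_refl _)
        _ ≤ (p:ℝ) := by exact_mod_cast hpK.le
    calc (2:ℝ) = ((2:ℝ) ^ ((1:ℝ)/(2*ε))) ^ (2*ε) := by
          have h1 : (1:ℝ)/(2*ε) * (2*ε) = 1 := by field_simp
          rw [← Real.rpow_mul (by norm_num), h1, Real.rpow_one]
      _ ≤ (p:ℝ) ^ (2*ε) := Real.rpow_le_rpow (Real.rpow_nonneg (by norm_num) _) hbase hε2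
  have hone : ∀ p ∈ P, (1:ℝ) ≤ (p:ℝ) ^ (2*ε) := by
    intro p hp
    have hp1 : (1:ℝ) ≤ (p:ℝ) := by
      have := (Nat.prime_of_mem_primeFactors hp).one_lt
      exact_mod_cast this.le
    calc (1:ℝ) = (1:ℝ) ^ (2*ε) := (Real.one_rpow _).symm
      _ ≤ (p:ℝ) ^ (2*ε) := Real.rpow_le_rpow (by norm_num) hp1 hε2
  have hLP : ∏ p ∈ L, (p:ℝ) ^ (2*ε) ≤ ∏ p ∈ P, (p:ℝ) ^ (2*ε) := by
    rw [← Finset.prod_filter_mul_prod_filter_not P (fun p => p ≤ K) (fun p => (p:ℝ) ^ (2*ε))]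
    rw [← hS, ← hL]
    apply le_mul_of_one_le_left
    · exact Finset.prod_nonneg (fun p _ => Real.rpow_nonneg (by positivity) _)
    · calc (1:ℝ) = ∏ _p ∈ S, (1:ℝ) := (Finset.prod_const_one).symm
        _ ≤ ∏ p ∈ S, (p:ℝ) ^ (2*ε) := Finset.prod_le_prod (fun _ _ => by norm_num)
            (fun p hp => hone p (Finset.mem_of_mem_filter p hp))
  have hprod : ∏ p ∈ P, (p:ℝ) ^ (2*ε) = (N:ℝ) ^ (2*ε) := by
    rw [Real.finset_prod_rpow P _ (fun p _ => by positivity) (2*ε)]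
    congr 1
    rw [← Nat.cast_prod]
    congr 1
    exact Nat.prod_primeFactors_of_squarefree hsf
  calc (2:ℝ) ^ P.card = (2:ℝ) ^ S.card * (2:ℝ) ^ L.card := by rw [← pow_add, hcard]
    _ ≤ (2:ℝ) ^ (K+1) * (2:ℝ) ^ L.card := by
        apply mul_le_mul_of_nonneg_right _ (by positivity)
        exact pow_le_pow_right₀ (by norm_num) hSle
    _ ≤ (2:ℝ) ^ (K+1) * ((N:ℝ) ^ (2*ε)) := by
        apply mul_le_mul_of_nonneg_left _ (by positivity)
        exact (hLle.trans hLP).trans_eq hprod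
end UncertaintyAux
theorem uncertainty_parabola (ε : ℝ) (hε : 0 < ε) :
    ∃ C : ℝ, 0 < C ∧ ∀ (N : ℕ) [NeZero N], Squarefree N →
      ∀ (f : ZMod N × ZMod N → ℂ) (E : Set (ZMod N × ZMod N)),
        f ≠ 0 →
        (∀ x : ZMod N × ZMod N, x ∉ E → f x = 0) →
        (∀ m : ZMod N × ZMod N, m ∉ parabola N → dft N f m = 0) →
        (E.ncard : ℝ) ≥ (N : ℝ) ^ ((2 : ℝ) - 2 * ε) / C ^ 8 := by
  classical
  open UncertaintyAux Finset in
  obtain ⟨C0, hC0ge1, hC0⟩ := UncertaintyAux.omega_bound ε hε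
  refine ⟨C0, lt_of_lt_of_le one_pos hC0ge1, ?_⟩
  intro N _inst hsf f E hf0 hsupp hspec
  set n : ℝ := (N : ℝ) with hn_def
  have hN0 : N ≠ 0 := NeZero.ne N
  have hn : 0 < n := by
    rw [hn_def]; exact_mod_cast Nat.pos_of_ne_zero hN0
  set a : ZMod N → ℂ := fun t => dft N f (sig N t) with ha
  -- Fourier representation of f via the parabola
  have hf : ∀ x, f x = (N : ℂ)⁻¹ * FF N a x := by
    intro x
    rw [← inversion N f x]
    congr 1
    rw [FF, ← Finset.sum_subset (Finset.subset_univ (parabola N))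
      (fun m _ hm => by rw [hspec m hm, zero_mul])]
    rw [parabola, Finset.sum_image (fun t _ s _ h => congrArg Prod.fst h)]
    rfl
  set A : ℝ := ∑ t : ZMod N, ‖a t‖^2 with hA_def
  have hl : ∀ z : ℂ, z * (starRingEnd ℂ) z = ((‖z‖^2 : ℝ) : ℂ) := by
    intro z
    rw [Complex.mul_conj, Complex.normSq_eq_norm_sq]
  have hAc : ∑ t : ZMod N, a t * (starRingEnd ℂ) (a t) = ((A : ℝ) : ℂ) := by
    rw [hA_def, Complex.ofReal_sum]
    exact Finset.sum_congr rfl fun t _ => hl _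
  -- real Parseval
  have hP2r : ∑ x : ZMod N × ZMod N, ‖FF N a x‖^2 = n^2 * A := by
    have hc := P2 N a
    have c1 : ∑ x : ZMod N × ZMod N, FF N a x * (starRingEnd ℂ) (FF N a x)
        = ((∑ x : ZMod N × ZMod N, ‖FF N a x‖^2 : ℝ) : ℂ) := by
      rw [Complex.ofReal_sum]
      exact Finset.sum_congr rfl fun x _ => hl _
    have c2 : (N:ℂ)^2 * ∑ t : ZMod N, a t * (starRingEnd ℂ) (a t) = (((n^2 * A) : ℝ) : ℂ) := by
      rw [hAc]
      push_cast [hn_def]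
      ring
    exact Complex.ofReal_inj.mp (c1.symm.trans (hc.trans c2))
  -- real L^4 bound
  set R : ℕ := 2 ^ N.primeFactors.card with hR_def
  have hP4r : ∑ x : ZMod N × ZMod N, ‖FF N a x‖^4 ≤ n^2 * R * A^2 := by
    have hc := P4 N a
    have c1 : ∑ x : ZMod N × ZMod N,
        (FF N a x * (starRingEnd ℂ) (FF N a x)) * (FF N a x * (starRingEnd ℂ) (FF N a x))
        = ((∑ x : ZMod N × ZMod N, ‖FF N a x‖^4 : ℝ) : ℂ) := by
      rw [Complex.ofReal_sum]
      apply Finset.sum_congr rfl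
      intro x _
      rw [hl]
      push_cast
      ring
    set Z : ℂ := ∑ q ∈ Finset.univ.filter
        (fun q : (ZMod N × ZMod N) × (ZMod N × ZMod N) =>
          sig N q.1.1 + sig N q.2.1 = sig N q.1.2 + sig N q.2.2),
        ((a q.1.1 * (starRingEnd ℂ) (a q.1.2)) * (a q.2.1 * (starRingEnd ℂ) (a q.2.2))) with hZ_def
    have hZ : ‖Z‖ ≤ (R : ℝ) * A^2 := by
      have h1 : ‖Z‖ ≤ ∑ q ∈ Finset.univ.filter
          (fun q : (ZMod N × ZMod N) × (ZMod N × ZMod N) =>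
            sig N q.1.1 + sig N q.2.1 = sig N q.1.2 + sig N q.2.2),
          ‖a q.1.1‖ * ‖a q.1.2‖ * ‖a q.2.1‖ * ‖a q.2.2‖ := by
        refine (norm_sum_le _ _).trans ?_
        apply le_of_eq
        apply Finset.sum_congr rfl
        intro q _
        rw [norm_mul, norm_mul, norm_mul, RCLike.norm_conj, RCLike.norm_conj]
        ring
      refine h1.trans ?_
      have h2 := Zbound N hsf a
      rw [hA_def, hR_def]
      refine h2.trans (le_of_eq ?_)
      push_cast
      ring
    have hsum_nonneg : (0:ℝ) ≤ ∑ x : ZMod N × ZMod N, ‖FF N a x‖^4 :=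
      Finset.sum_nonneg fun x _ => by positivity
    calc ∑ x : ZMod N × ZMod N, ‖FF N a x‖^4
        = ‖((∑ x : ZMod N × ZMod N, ‖FF N a x‖^4 : ℝ) : ℂ)‖ := by
          rw [Complex.norm_real, Real.norm_eq_abs, abs_of_nonneg hsum_nonneg]
      _ = ‖(N:ℂ)^2 * Z‖ := by rw [← c1, hc]
      _ = n^2 * ‖Z‖ := by rw [norm_mul, norm_pow, Complex.norm_natCast]
      _ ≤ n^2 * ((R:ℝ) * A^2) := by
          apply mul_le_mul_of_nonneg_left hZ (by positivity)
      _ = n^2 * R * A^2 := by ring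
  -- norms of f
  have hfx : ∀ x, ‖f x‖ = n⁻¹ * ‖FF N a x‖ := by
    intro x
    rw [hf x, norm_mul, norm_inv, Complex.norm_natCast]
  have hB2 : ∑ x : ZMod N × ZMod N, ‖f x‖^2 = A := by
    simp_rw [hfx, mul_pow]
    rw [← Finset.mul_sum, hP2r]
    field_simp
  have hB4 : n^2 * ∑ x : ZMod N × ZMod N, ‖f x‖^4 ≤ (R:ℝ) * A^2 := by
    have e4 : ∑ x : ZMod N × ZMod N, ‖f x‖^4 = (n⁻¹)^4 * ∑ x : ZMod N × ZMod N, ‖FF N a x‖^4 := by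
      simp_rw [hfx, mul_pow]
      rw [← Finset.mul_sum]
    rw [e4]
    calc n^2 * ((n⁻¹)^4 * ∑ x : ZMod N × ZMod N, ‖FF N a x‖^4)
        = (n⁻¹)^2 * ∑ x : ZMod N × ZMod N, ‖FF N a x‖^4 := by
          field_simp
      _ ≤ (n⁻¹)^2 * (n^2 * R * A^2) := by
          apply mul_le_mul_of_nonneg_left hP4r (by positivity)
      _ = (R:ℝ) * A^2 := by
          field_simp
  -- positivity of A
  obtain ⟨x0, hx0⟩ : ∃ x, f x ≠ 0 := Function.ne_iff.mp hf0
  have hApos : 0 < A := by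
    rw [← hB2]
    have hpos := norm_pos_iff.mpr hx0
    have h0 : 0 < ‖f x0‖^2 := by positivity
    exact lt_of_lt_of_le h0 (Finset.single_le_sum (f := fun x => ‖f x‖^2)
      (fun x _ => by positivity) (Finset.mem_univ x0))
  -- Cauchy-Schwarz on the support
  set s : Finset (ZMod N × ZMod N) := Finset.univ.filter (fun x => f x ≠ 0) with hs_def
  have hCS : A^2 ≤ (s.card : ℝ) * ∑ x : ZMod N × ZMod N, ‖f x‖^4 := by
    have hA' : A = ∑ x ∈ s, ‖f x‖^2 := by
      rw [← hB2]
      symm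
      apply Finset.sum_subset (Finset.subset_univ s)
      intro x _ hx
      have : f x = 0 := by
        by_contra hne
        exact hx (Finset.mem_filter.mpr ⟨Finset.mem_univ x, hne⟩)
      rw [this]
      simp
    have hcs := Finset.sum_mul_sq_le_sq_mul_sq s (fun _ => (1:ℝ)) (fun x => ‖f x‖^2)
    calc A^2 = (∑ x ∈ s, (1:ℝ) * ‖f x‖^2)^2 := by rw [hA']; simp
      _ ≤ (∑ _x ∈ s, (1:ℝ)^2) * (∑ x ∈ s, (‖f x‖^2)^2) := hcs
      _ = (s.card : ℝ) * ∑ x ∈ s, ‖f x‖^4 := by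
          simp only [one_pow, Finset.sum_const, nsmul_eq_mul, mul_one]
          congr 1
          apply Finset.sum_congr rfl
          intro x _
          ring
      _ ≤ (s.card : ℝ) * ∑ x : ZMod N × ZMod N, ‖f x‖^4 := by
          apply mul_le_mul_of_nonneg_left _ (by positivity)
          apply Finset.sum_le_sum_of_subset_of_nonneg (Finset.subset_univ s)
          intro x _ _
          positivity
  -- key inequality  N² ≤ |s| · R
  have hkey : n^2 ≤ (s.card : ℝ) * R := by
    have h1 : n^2 * A^2 ≤ n^2 * ((s.card : ℝ) * ∑ x : ZMod N × ZMod N, ‖f x‖^4) :=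
      mul_le_mul_of_nonneg_left hCS (by positivity)
    have h2 : n^2 * ((s.card : ℝ) * ∑ x : ZMod N × ZMod N, ‖f x‖^4)
        = (s.card : ℝ) * (n^2 * ∑ x : ZMod N × ZMod N, ‖f x‖^4) := by ring
    have h3 : (s.card : ℝ) * (n^2 * ∑ x : ZMod N × ZMod N, ‖f x‖^4)
        ≤ (s.card : ℝ) * ((R:ℝ) * A^2) :=
      mul_le_mul_of_nonneg_left hB4 (by positivity)
    have h4 : n^2 * A^2 ≤ ((s.card : ℝ) * R) * A^2 := by
      calc n^2 * A^2 ≤ (s.card : ℝ) * ((R:ℝ) * A^2) := (h1.trans_eq h2).trans h3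
        _ = ((s.card : ℝ) * R) * A^2 := by ring
    have hA2 : (0:ℝ) < A^2 := by positivity
    exact le_of_mul_le_mul_right h4 hA2
  -- |s| ≤ |E|
  have hsE : (s.card : ℝ) ≤ (E.ncard : ℝ) := by
    have hsub : ↑s ⊆ E := by
      intro x hx
      by_contra hxe
      exact (Finset.mem_filter.mp hx).2 (hsupp x hxe)
    have := Set.ncard_le_ncard hsub (Set.toFinite E)
    rw [Set.ncard_coe_finset] at this
    exact_mod_cast this
  -- bound on R
  have hRC : (R : ℝ) ≤ C0^8 * n^(2*ε) := by
    have h1 : (R:ℝ) = (2:ℝ) ^ N.primeFactors.card := by rw [hR_def]; push_cast; rfl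
    rw [h1]
    refine (hC0 N hsf).trans ?_
    apply mul_le_mul_of_nonneg_right _ (Real.rpow_nonneg hn.le _)
    calc C0 = C0^1 := (pow_one _).symm
      _ ≤ C0^8 := pow_le_pow_right₀ hC0ge1 (by norm_num)
  -- final computation
  have hC8 : (0:ℝ) < C0^8 := by positivity
  rw [ge_iff_le, div_le_iff₀ hC8]
  have hrw : n ^ ((2:ℝ) - 2*ε) = n^(2:ℕ) / n^(2*ε) := by
    rw [show ((2:ℝ) - 2*ε) = ((2:ℕ):ℝ) - 2*ε by norm_num, Real.rpow_sub hn, Real.rpow_natCast]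
  rw [hrw, div_le_iff₀ (Real.rpow_pos_of_pos hn _)]
  have hElarge : n^2 ≤ (E.ncard : ℝ) * (C0^8 * n^(2*ε)) := by
    calc n^2 ≤ (s.card : ℝ) * R := hkey
      _ ≤ (E.ncard : ℝ) * (C0^8 * n^(2*ε)) := by
          apply mul_le_mul hsE hRC (by positivity) (by positivity)
  calc n^(2:ℕ) = n^2 := by norm_num
    _ ≤ (E.ncard : ℝ) * (C0^8 * n^(2*ε)) := hElarge
    _ = (E.ncard : ℝ) * C0^8 * n^(2*ε) := by ring
end

section
/- For every ε > 0 there exists a constant C_ε > 0 such that the following exact recovery statement holds for every squarefree positive integer N: if f, g : (ℤ/Nℤ)² → ℂ satisfy |supp(f)| + |supp(g)| < N^{2−2ε} / C_ε⁸ and f̂(m) = ĝ(m) for all m outside the parabola Σ = {(t, t²) : t ∈ ℤ/Nℤ}, then f = g. -/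
open scoped BigOperators

namespace ExactRecovery

open Finset

variable {N : ℕ} [NeZero N]

/-! ### Character lemmas -/

lemma kernel_eq (u : ZMod N) :
    Complex.exp (-2 * Real.pi * Complex.I * ((u.val : ℕ) : ℂ) / (N : ℂ)) =
      ZMod.stdAddChar (-u) := by
  have h1 : (-u : ZMod N) = ((-(u.val : ℤ) : ℤ) : ZMod N) := by
    simp [ZMod.natCast_val, ZMod.cast_id]
  rw [h1, ZMod.stdAddChar_coe]
  push_cast
  ring_nf

lemma conj_psi (u : ZMod N) :
    (starRingEnd ℂ) (ZMod.stdAddChar u) = ZMod.stdAddChar (-u) := by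
  rw [AddChar.starComp_apply (by rw [ZMod.ringChar_zmod_n]; exact Nat.pos_of_ne_zero (NeZero.ne N)),
    AddChar.inv_apply]

lemma sum_psi (b : ZMod N) :
    ∑ x : ZMod N, ZMod.stdAddChar (x * b) = if b = 0 then (N : ℂ) else 0 := by
  rw [AddChar.sum_mulShift b (ZMod.isPrimitive_stdAddChar N), ZMod.card]
  split_ifs <;> simp

lemma sum_psi2 (b₁ b₂ : ZMod N) :
    ∑ x : ZMod N × ZMod N, ZMod.stdAddChar (x.1 * b₁ + x.2 * b₂) =
      if b₁ = 0 ∧ b₂ = 0 then (N : ℂ) ^ 2 else 0 := by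
  rw [Fintype.sum_prod_type]
  simp_rw [AddChar.map_add_eq_mul, ← Finset.mul_sum, sum_psi, ← Finset.sum_mul, sum_psi]
  by_cases h1 : b₁ = 0 <;> by_cases h2 : b₂ = 0 <;> simp [h1, h2] <;> ring

/-! ### Basic dft lemmas -/

lemma dft_eq (f : ZMod N × ZMod N → ℂ) (m : ZMod N × ZMod N) :
    dft N f m = (N : ℂ)⁻¹ * ∑ x : ZMod N × ZMod N,
      f x * ZMod.stdAddChar (-(x.1 * m.1 + x.2 * m.2)) := by
  unfold dft
  simp_rw [kernel_eq]

lemma dft_sub (f g : ZMod N × ZMod N → ℂ) (m : ZMod N × ZMod N) :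
    dft N (f - g) m = dft N f m - dft N g m := by
  unfold dft
  rw [← mul_sub, ← Finset.sum_sub_distrib]
  congr 1
  refine Fintype.sum_congr _ _ fun x => ?_
  simp [sub_mul]

lemma inversion (h : ZMod N × ZMod N → ℂ) (x : ZMod N × ZMod N) :
    ∑ m : ZMod N × ZMod N, dft N h m * ZMod.stdAddChar (x.1 * m.1 + x.2 * m.2)
      = (N : ℂ) * h x := by
  have hN : (N : ℂ) ≠ 0 := Nat.cast_ne_zero.2 (NeZero.ne N)
  simp_rw [dft_eq, mul_assoc, ← Finset.mul_sum, Finset.sum_mul]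
  rw [Finset.sum_comm]
  have step : ∀ y : ZMod N × ZMod N,
      ∑ m : ZMod N × ZMod N,
        (h y * ZMod.stdAddChar (-(y.1 * m.1 + y.2 * m.2))) *
          ZMod.stdAddChar (x.1 * m.1 + x.2 * m.2)
        = if x.1 - y.1 = 0 ∧ x.2 - y.2 = 0 then h y * (N : ℂ) ^ 2 else 0 := by
    intro y
    have comb : ∀ m : ZMod N × ZMod N,
        (h y * ZMod.stdAddChar (-(y.1 * m.1 + y.2 * m.2))) *
          ZMod.stdAddChar (x.1 * m.1 + x.2 * m.2)
        = h y * ZMod.stdAddChar (m.1 * (x.1 - y.1) + m.2 * (x.2 - y.2)) := by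
      intro m
      rw [mul_assoc, ← AddChar.map_add_eq_mul]
      congr 1
      ring
    simp_rw [comb, ← Finset.mul_sum, sum_psi2]
    split_ifs <;> simp
  simp_rw [step]
  rw [Finset.sum_eq_single x]
  · simp
    field_simp
  · intro y _ hy
    have : ¬(x.1 - y.1 = 0 ∧ x.2 - y.2 = 0) := by
      rw [sub_eq_zero, sub_eq_zero]
      intro hc
      exact hy (Prod.ext hc.1.symm hc.2.symm)
    simp [this]
  · simp

lemma extension (h : ZMod N × ZMod N → ℂ)
    (H0 : ∀ m ∉ parabola N, dft N h m = 0) (x : ZMod N × ZMod N) :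
    (N : ℂ) * h x = ∑ t : ZMod N,
      dft N h (t, t ^ 2) * ZMod.stdAddChar (x.1 * t + x.2 * t ^ 2) := by
  rw [← inversion h x,
    ← Finset.sum_subset (Finset.subset_univ (parabola N))
      (fun m _ hm => by rw [H0 m hm, zero_mul]),
    parabola, Finset.sum_image (fun a _ b _ hab => (Prod.ext_iff.1 hab).1)]

/-! ### Orthogonality machine -/

lemma pair_orth {ι : Type*} [Fintype ι] [DecidableEq ι] (b : ι → ℂ) (u v : ι → ZMod N) :
    ∑ x : ZMod N × ZMod N,
      (∑ i, b i * ZMod.stdAddChar (x.1 * u i + x.2 * v i)) *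
      (starRingEnd ℂ) (∑ i, b i * ZMod.stdAddChar (x.1 * u i + x.2 * v i)) =
    (N : ℂ) ^ 2 * ∑ p ∈ Finset.univ.filter
        (fun p : ι × ι => u p.1 = u p.2 ∧ v p.1 = v p.2),
      b p.1 * (starRingEnd ℂ) (b p.2) := by
  have key : ∀ x : ZMod N × ZMod N,
      (∑ i, b i * ZMod.stdAddChar (x.1 * u i + x.2 * v i)) *
      (starRingEnd ℂ) (∑ i, b i * ZMod.stdAddChar (x.1 * u i + x.2 * v i)) =
      ∑ p : ι × ι, (b p.1 * (starRingEnd ℂ) (b p.2)) *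
        ZMod.stdAddChar (x.1 * (u p.1 - u p.2) + x.2 * (v p.1 - v p.2)) := by
    intro x
    rw [map_sum, Finset.sum_mul_sum]
    conv_rhs => rw [Fintype.sum_prod_type]
    refine Fintype.sum_congr _ _ fun i => Fintype.sum_congr _ _ fun j => ?_
    rw [map_mul, conj_psi, mul_mul_mul_comm, ← AddChar.map_add_eq_mul]
    congr 1
    ring_nf
  simp_rw [key]
  rw [Finset.sum_comm]
  simp_rw [← Finset.mul_sum, sum_psi2, Finset.sum_filter]
  rw [Finset.mul_sum]
  refine Fintype.sum_congr _ _ fun p => ?_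
  by_cases h : u p.1 = u p.2 ∧ v p.1 = v p.2
  · simp [h, sub_eq_zero.2 h.1, sub_eq_zero.2 h.2]; ring
  · have : ¬ (u p.1 - u p.2 = 0 ∧ v p.1 - v p.2 = 0) := by
      simpa [sub_eq_zero] using h
    simp [h, this]

/-- The extension operator of coefficients `a` from the parabola. -/
noncomputable def Gfun (N : ℕ) [NeZero N] (a : ZMod N → ℂ) (x : ZMod N × ZMod N) : ℂ :=
  ∑ t : ZMod N, a t * ZMod.stdAddChar (x.1 * t + x.2 * t ^ 2)

lemma parseval_G (a : ZMod N → ℂ) :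
    ∑ x : ZMod N × ZMod N, Gfun N a x * (starRingEnd ℂ) (Gfun N a x)
      = (N : ℂ) ^ 2 * ∑ t : ZMod N, a t * (starRingEnd ℂ) (a t) := by
  unfold Gfun
  rw [pair_orth a (fun t => t) (fun t => t ^ 2)]
  congr 1
  rw [Finset.sum_filter, Fintype.sum_prod_type]
  refine Fintype.sum_congr _ _ fun i => ?_
  have hc : ∀ j : ZMod N, (i = j ∧ i ^ 2 = j ^ 2) ↔ j = i := by
    intro j
    constructor
    · exact fun h => h.1.symm
    · rintro rfl; exact ⟨rfl, rfl⟩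
  simp_rw [hc]
  simp

/-- The additive-energy quadruple set of the parabola. -/
def quadS (N : ℕ) [NeZero N] : Finset ((ZMod N × ZMod N) × (ZMod N × ZMod N)) :=
  Finset.univ.filter (fun p => p.1.1 + p.1.2 = p.2.1 + p.2.2 ∧
    p.1.1 ^ 2 + p.1.2 ^ 2 = p.2.1 ^ 2 + p.2.2 ^ 2)

lemma fourth_G (a : ZMod N → ℂ) :
    ∑ x : ZMod N × ZMod N,
      (Gfun N a x * Gfun N a x) * (starRingEnd ℂ) (Gfun N a x * Gfun N a x)
      = (N : ℂ) ^ 2 * ∑ p ∈ quadS N,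
          (a p.1.1 * a p.1.2) * (starRingEnd ℂ) (a p.2.1 * a p.2.2) := by
  have hsq : ∀ x : ZMod N × ZMod N, Gfun N a x * Gfun N a x =
      ∑ p : ZMod N × ZMod N, (a p.1 * a p.2) *
        ZMod.stdAddChar (x.1 * (p.1 + p.2) + x.2 * (p.1 ^ 2 + p.2 ^ 2)) := by
    intro x
    unfold Gfun
    rw [Finset.sum_mul_sum]
    conv_rhs => rw [Fintype.sum_prod_type]
    refine Fintype.sum_congr _ _ fun i => Fintype.sum_congr _ _ fun j => ?_
    rw [mul_mul_mul_comm, ← AddChar.map_add_eq_mul]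
    congr 1
    ring
  simp_rw [hsq]
  exact pair_orth (fun p : ZMod N × ZMod N => a p.1 * a p.2)
    (fun p => p.1 + p.2) (fun p => p.1 ^ 2 + p.2 ^ 2)

/-! ### Counting lemmas -/

lemma two_mul_card (c : ZMod N) :
    (Finset.univ.filter (fun u : ZMod N => 2 * u = c)).card ≤ 2 := by
  have key : ∀ u ∈ Finset.univ.filter (fun u : ZMod N => 2 * u = c),
      2 * u.val ∈ ({c.val, c.val + N} : Finset ℕ) := by
    intro u hu
    rw [Finset.mem_filter] at hu
    have h1 : ((2 * u.val : ℕ) : ZMod N) = c := by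
      push_cast
      rw [ZMod.natCast_val, ZMod.cast_id]
      exact hu.2
    obtain ⟨k, hk⟩ := (ZMod.natCast_eq_iff N (2 * u.val) c).1 h1
    have hk1 : k ≤ 1 := by
      by_contra hk2
      push_neg at hk2
      have h3 : N * 2 ≤ N * k := Nat.mul_le_mul_left N hk2
      have h4 := u.val_lt
      omega
    interval_cases k
    · rw [Finset.mem_insert, Finset.mem_singleton]; omega
    · rw [Finset.mem_insert, Finset.mem_singleton]; omega
  calc (Finset.univ.filter (fun u : ZMod N => 2 * u = c)).card
      ≤ ({c.val, c.val + N} : Finset ℕ).card := by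
        apply Finset.card_le_card_of_injOn (fun u => 2 * u.val) (fun u hu => key u hu)
        intro u _ v _ huv
        simp only at huv
        exact ZMod.val_injective N (by omega)
    _ ≤ 2 := Finset.card_insert_le _ _ |>.trans (by simp)

lemma sq_roots_prime {p : ℕ} (hp : p.Prime) (r : ZMod p) :
    Nat.card {x : ZMod p // x ^ 2 = r} ≤ 2 := by
  haveI : Fact p.Prime := ⟨hp⟩
  rw [Nat.card_eq_fintype_card, Fintype.card_subtype]
  calc (Finset.univ.filter (fun x : ZMod p => x ^ 2 = r)).card
      ≤ (Polynomial.nthRoots 2 r).toFinset.card := by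
        apply Finset.card_le_card
        intro x hx
        rw [Finset.mem_filter] at hx
        rw [Multiset.mem_toFinset, Polynomial.mem_nthRoots (by norm_num : (0:ℕ) < 2)]
        exact hx.2
    _ ≤ Multiset.card (Polynomial.nthRoots 2 r) := Multiset.toFinset_card_le _
    _ ≤ 2 := Polynomial.card_nthRoots 2 r

lemma sq_roots_card : ∀ N : ℕ, N ≠ 0 → Squarefree N → ∀ r : ZMod N,
    Nat.card {x : ZMod N // x ^ 2 = r} ≤ 2 ^ N.primeFactors.card := by
  intro N
  induction N using Nat.strong_induction_on with
  | _ N ih =>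
    intro hN hsf r
    haveI : NeZero N := ⟨hN⟩
    rcases eq_or_ne N 1 with rfl | hN1
    · have h1 : Nat.card {x : ZMod 1 // x ^ 2 = r} ≤ Nat.card (ZMod 1) :=
        Nat.card_le_card_of_injective _ Subtype.val_injective
      simpa using h1
    · set p := N.minFac with hp_def
      have hp : p.Prime := Nat.minFac_prime hN1
      set m := N / p with hm_def
      have hpm : p * m = N := Nat.mul_div_cancel' N.minFac_dvd
      have hm0 : m ≠ 0 := by
        intro h
        rw [h, mul_zero] at hpm
        exact hN hpm.symm
      have hcop : p.Coprime m := by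
        rw [Nat.Prime.coprime_iff_not_dvd hp]
        intro hdvd
        have : p * p ∣ N := by
          rw [← hpm]
          exact mul_dvd_mul_left p hdvd
        exact hp.one_lt.ne' (Nat.isUnit_iff.1 (hsf p this))
      have hmlt : m < N := Nat.div_lt_self (Nat.pos_of_ne_zero hN) hp.one_lt
      have hsm : Squarefree m := hsf.squarefree_of_dvd (Nat.div_dvd_of_dvd N.minFac_dvd)
      haveI : NeZero p := ⟨hp.ne_zero⟩
      haveI : NeZero m := ⟨hm0⟩
      let e : ZMod N ≃+* ZMod p × ZMod m :=
        (ZMod.ringEquivCongr hpm.symm).trans (ZMod.chineseRemainder hcop)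
      have hinj : Nat.card {x : ZMod N // x ^ 2 = r} ≤
          Nat.card ({y : ZMod p // y ^ 2 = (e r).1} × {z : ZMod m // z ^ 2 = (e r).2}) := by
        apply Nat.card_le_card_of_injective
          (fun x : {x : ZMod N // x ^ 2 = r} =>
            (⟨(e x.1).1, by rw [← Prod.pow_fst, ← map_pow, x.2]⟩,
             ⟨(e x.1).2, by rw [← Prod.pow_snd, ← map_pow, x.2]⟩))
        intro a b hab
        simp only [Prod.mk.injEq, Subtype.mk.injEq] at hab
        exact Subtype.ext (e.injective (Prod.ext hab.1 hab.2))
      rw [Nat.card_prod] at hinj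
      have h1 := sq_roots_prime hp (e r).1
      have h2 := ih m hmlt hm0 hsm (e r).2
      calc Nat.card {x : ZMod N // x ^ 2 = r}
          ≤ 2 * 2 ^ m.primeFactors.card := hinj.trans (Nat.mul_le_mul h1 h2)
        _ = 2 ^ N.primeFactors.card := by
            rw [← hpm, Nat.Coprime.primeFactors_mul hcop,
              Finset.card_union_of_disjoint (Nat.Coprime.disjoint_primeFactors hcop),
              hp.primeFactors]
            simp [pow_succ, pow_add, mul_comm]

lemma sq_roots_card' (hsf : Squarefree N) (r : ZMod N) :
    (Finset.univ.filter (fun x : ZMod N => x ^ 2 = r)).card ≤ 2 ^ N.primeFactors.card := by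
  have := sq_roots_card N (NeZero.ne N) hsf r
  rwa [Nat.card_eq_fintype_card, Fintype.card_subtype] at this

lemma fiber_card (hsf : Squarefree N) (s q : ZMod N) :
    (Finset.univ.filter (fun p : ZMod N × ZMod N => s = p.1 + p.2 ∧ q = p.1 ^ 2 + p.2 ^ 2)).card
      ≤ 2 ^ (N.primeFactors.card + 1) := by
  set T := Finset.univ.filter
    (fun p : ZMod N × ZMod N => s = p.1 + p.2 ∧ q = p.1 ^ 2 + p.2 ^ 2) with hT
  have hfib : ∀ d ∈ T.image (fun p => p.1 - p.2),
      (T.filter (fun p => p.1 - p.2 = d)).card ≤ 2 := by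
    intro d _
    refine le_trans (Finset.card_le_card_of_injOn (fun p => p.1)
      (fun p hp => ?_) (fun p hp p' hp' hpp => ?_)) (two_mul_card (s + d))
    · simp only [T, Finset.mem_coe, Finset.mem_filter, Finset.mem_univ, true_and] at hp ⊢
      obtain ⟨⟨h1, _⟩, h2⟩ := hp
      rw [h1, ← h2]; ring
    · simp only [T, Finset.mem_coe, Finset.mem_filter, Finset.mem_univ, true_and] at hp hp'
      simp only at hpp
      have e2 : p.2 = p'.2 := by
        have ha : p.2 = p.1 - d := by rw [← hp.2]; ring
        have hb : p'.2 = p'.1 - d := by rw [← hp'.2]; ring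
        rw [ha, hb, hpp]
      exact Prod.ext hpp e2
  have himg : T.image (fun p => p.1 - p.2) ⊆
      Finset.univ.filter (fun d : ZMod N => d ^ 2 = 2 * q - s ^ 2) := by
    intro d hd
    simp only [Finset.mem_image] at hd
    obtain ⟨p, hp, rfl⟩ := hd
    simp only [T, Finset.mem_filter, Finset.mem_univ, true_and] at hp ⊢
    rw [hp.1, hp.2]; ring
  calc T.card ≤ 2 * (T.image (fun p => p.1 - p.2)).card :=
        Finset.card_le_mul_card_image _ 2 hfib
    _ ≤ 2 * 2 ^ N.primeFactors.card :=
        Nat.mul_le_mul_left 2 ((Finset.card_le_card himg).trans (sq_roots_card' hsf _))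
    _ = 2 ^ (N.primeFactors.card + 1) := by ring

/-! ### Energy bound -/

lemma energy_bound (hsf : Squarefree N) (w : ZMod N → ℝ) :
    ∑ p ∈ quadS N, w p.1.1 * w p.1.2 * w p.2.1 * w p.2.2
      ≤ 2 ^ (N.primeFactors.card + 1) * (∑ t, w t ^ 2) ^ 2 := by
  have hsym : ∑ p ∈ quadS N, (w p.2.1 * w p.2.2) ^ 2
      = ∑ p ∈ quadS N, (w p.1.1 * w p.1.2) ^ 2 := by
    refine Finset.sum_equiv (Equiv.prodComm _ _) (fun p => ?_) (fun p _ => rfl)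
    simp only [quadS, Finset.mem_filter, Finset.mem_univ, true_and, Equiv.prodComm_apply,
      Prod.fst_swap, Prod.snd_swap]
    exact ⟨fun h => ⟨h.1.symm, h.2.symm⟩, fun h => ⟨h.1.symm, h.2.symm⟩⟩
  have step1 : ∑ p ∈ quadS N, w p.1.1 * w p.1.2 * w p.2.1 * w p.2.2
      ≤ ∑ p ∈ quadS N, (w p.1.1 * w p.1.2) ^ 2 := by
    have h2 : (2:ℝ) * ∑ p ∈ quadS N, w p.1.1 * w p.1.2 * w p.2.1 * w p.2.2
        ≤ ∑ p ∈ quadS N, ((w p.1.1 * w p.1.2) ^ 2 + (w p.2.1 * w p.2.2) ^ 2) := by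
      rw [Finset.mul_sum]
      refine Finset.sum_le_sum fun p _ => ?_
      have := two_mul_le_add_sq (w p.1.1 * w p.1.2) (w p.2.1 * w p.2.2)
      nlinarith [this]
    rw [Finset.sum_add_distrib, hsym] at h2
    linarith
  have step2 : ∑ p ∈ quadS N, (w p.1.1 * w p.1.2) ^ 2
      ≤ 2 ^ (N.primeFactors.card + 1) * ∑ p₁ : ZMod N × ZMod N, (w p₁.1 * w p₁.2) ^ 2 := by
    rw [quadS, Finset.sum_filter, Fintype.sum_prod_type]
    have inner : ∀ p₁ : ZMod N × ZMod N,
        (∑ p₂ : ZMod N × ZMod N, if p₁.1 + p₁.2 = p₂.1 + p₂.2 ∧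
            p₁.1 ^ 2 + p₁.2 ^ 2 = p₂.1 ^ 2 + p₂.2 ^ 2 then (w p₁.1 * w p₁.2) ^ 2 else 0)
          ≤ 2 ^ (N.primeFactors.card + 1) * (w p₁.1 * w p₁.2) ^ 2 := by
      intro p₁
      rw [← Finset.sum_filter, Finset.sum_const, nsmul_eq_mul]
      have hc := fiber_card hsf (p₁.1 + p₁.2) (p₁.1 ^ 2 + p₁.2 ^ 2)
      have hcr : ((Finset.univ.filter (fun p₂ : ZMod N × ZMod N => p₁.1 + p₁.2 = p₂.1 + p₂.2 ∧
          p₁.1 ^ 2 + p₁.2 ^ 2 = p₂.1 ^ 2 + p₂.2 ^ 2)).card : ℝ)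
          ≤ (2:ℝ) ^ (N.primeFactors.card + 1) := by
        exact_mod_cast hc
      exact mul_le_mul_of_nonneg_right hcr (sq_nonneg _)
    calc _ ≤ ∑ p₁ : ZMod N × ZMod N, 2 ^ (N.primeFactors.card + 1) * (w p₁.1 * w p₁.2) ^ 2 :=
          Finset.sum_le_sum fun p₁ _ => inner p₁
      _ = 2 ^ (N.primeFactors.card + 1) * ∑ p₁ : ZMod N × ZMod N, (w p₁.1 * w p₁.2) ^ 2 := by
          rw [Finset.mul_sum]
  have step3 : ∑ p₁ : ZMod N × ZMod N, (w p₁.1 * w p₁.2) ^ 2 = (∑ t, w t ^ 2) ^ 2 := by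
    rw [Fintype.sum_prod_type, sq (∑ t, w t ^ 2), Finset.sum_mul_sum]
    refine Fintype.sum_congr _ _ fun i => Fintype.sum_congr _ _ fun j => ?_
    ring
  calc _ ≤ _ := step1
    _ ≤ _ := step2
    _ = _ := by rw [step3]

/-! ### Divisor bound -/

lemma omega_bound (ε : ℝ) (hε : 0 < ε) : ∃ B : ℕ, ∀ N : ℕ, N ≠ 0 → Squarefree N →
    (2:ℝ) ^ N.primeFactors.card ≤ 2 ^ B * (N:ℝ) ^ (2*ε) := by
  refine ⟨⌈(2:ℝ) ^ ((1:ℝ)/(2*ε))⌉₊, fun N hN hsf => ?_⟩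
  set B := ⌈(2:ℝ) ^ ((1:ℝ)/(2*ε))⌉₊ with hB
  set P := N.primeFactors with hP
  have hsplit : (2:ℝ) ^ P.card = (∏ _p ∈ P.filter (· < B), (2:ℝ)) *
      (∏ _p ∈ P.filter (¬ · < B), (2:ℝ)) := by
    rw [Finset.prod_const, Finset.prod_const, ← pow_add,
      Finset.card_filter_add_card_filter_not]
  have h1 : (∏ _p ∈ P.filter (· < B), (2:ℝ)) ≤ 2 ^ B := by
    rw [Finset.prod_const]
    apply pow_le_pow_right₀ one_le_two
    calc (P.filter (· < B)).card ≤ (Finset.range B).card := by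
          apply Finset.card_le_card
          intro p hp
          rw [Finset.mem_filter] at hp
          exact Finset.mem_range.2 hp.2
      _ = B := Finset.card_range B
  have h2 : (∏ p ∈ P.filter (¬ · < B), (2:ℝ)) ≤ (N:ℝ) ^ (2*ε) := by
    have step : ∀ p ∈ P.filter (¬ · < B), (2:ℝ) ≤ (p:ℝ) ^ (2*ε) := by
      intro p hp
      rw [Finset.mem_filter, not_lt] at hp
      have hp2 : (2:ℝ) ^ ((1:ℝ)/(2*ε)) ≤ (p:ℝ) :=
        (Nat.le_ceil _).trans (by exact_mod_cast hp.2)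
      calc (2:ℝ) = ((2:ℝ) ^ ((1:ℝ)/(2*ε))) ^ (2*ε) := by
            rw [← Real.rpow_mul (by norm_num), one_div_mul_cancel (by positivity),
              Real.rpow_one]
        _ ≤ (p:ℝ) ^ (2*ε) :=
            Real.rpow_le_rpow (by positivity) hp2 (by positivity)
    calc (∏ _p ∈ P.filter (¬ · < B), (2:ℝ)) ≤ ∏ p ∈ P.filter (¬ · < B), (p:ℝ) ^ (2*ε) :=
          Finset.prod_le_prod (fun _ _ => by norm_num) step
      _ = ((∏ p ∈ P.filter (¬ · < B), (p:ℝ))) ^ (2*ε) :=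
          (Real.finset_prod_rpow (P.filter (¬ · < B)) (fun p => (p:ℝ))
            (fun p _ => by positivity) (2*ε))
      _ ≤ (N:ℝ) ^ (2*ε) := by
          apply Real.rpow_le_rpow (by positivity) _ (by positivity)
          have hdvd : ∏ p ∈ P.filter (¬ · < B), p ∣ N := by
            calc ∏ p ∈ P.filter (¬ · < B), p ∣ ∏ p ∈ P, p :=
                  Finset.prod_dvd_prod_of_subset _ _ _ (Finset.filter_subset _ _)
              _ = N := Nat.prod_primeFactors_of_squarefree hsf
          have hle := Nat.le_of_dvd (Nat.pos_of_ne_zero hN) hdvd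
          calc (∏ p ∈ P.filter (¬ · < B), (p:ℝ)) = ((∏ p ∈ P.filter (¬ · < B), p : ℕ) : ℝ) := by
                push_cast; ring
            _ ≤ (N:ℝ) := by exact_mod_cast hle
  calc (2:ℝ) ^ P.card = _ := hsplit
    _ ≤ 2 ^ B * (N:ℝ) ^ (2*ε) := by
        apply mul_le_mul h1 h2 (Finset.prod_nonneg fun _ _ => by norm_num) (by positivity)

end ExactRecovery

theorem exact_recovery_parabola (ε : ℝ) (hε : 0 < ε) :
    ∃ C : ℝ, 0 < C ∧ ∀ (N : ℕ) [NeZero N], Squarefree N →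
      ∀ f g : ZMod N × ZMod N → ℂ,
        ((Function.support f).ncard : ℝ) + ((Function.support g).ncard : ℝ) <
          (N : ℝ) ^ ((2 : ℝ) - 2 * ε) / C ^ 8 →
        (∀ m : ZMod N × ZMod N, m ∉ parabola N → dft N f m = dft N g m) →
        f = g := by
  classical
  obtain ⟨B, hB⟩ := ExactRecovery.omega_bound ε hε
  refine ⟨(2:ℝ) ^ (B + 1), by positivity, ?_⟩
  intro N _ hsf f g hsize hfour
  by_contra hfg
  set h : ZMod N × ZMod N → ℂ := f - g with hh_def
  have hh : h ≠ 0 := sub_ne_zero.2 hfg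
  have H0 : ∀ m ∉ parabola N, dft N h m = 0 := fun m hm => by
    rw [hh_def, ExactRecovery.dft_sub, hfour m hm, sub_self]
  set a : ZMod N → ℂ := fun t => dft N h (t, t ^ 2) with ha_def
  have hext : ∀ x, (N:ℂ) * h x = ExactRecovery.Gfun N a x :=
    fun x => ExactRecovery.extension h H0 x
  have hN0 : (0:ℝ) < (N:ℝ) := by
    exact_mod_cast Nat.pos_of_ne_zero (NeZero.ne N)
  -- real quantities
  set A : ℝ := ∑ t : ZMod N, ‖a t‖ ^ 2 with hA_def
  set SB : ℝ := ∑ x : ZMod N × ZMod N, ‖h x‖ ^ 2 with hSB_def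
  set S4 : ℝ := ∑ x : ZMod N × ZMod N, ‖h x‖ ^ 4 with hS4_def
  set D : ℝ := (2:ℝ) ^ (N.primeFactors.card + 1) with hD_def
  have of1 : ∀ z : ℂ, z * (starRingEnd ℂ) z = ((‖z‖ ^ 2 : ℝ) : ℂ) := fun z => by
    rw [Complex.mul_conj, Complex.normSq_eq_norm_sq]
  -- Parseval
  have P2 : SB = A := by
    have hG := ExactRecovery.parseval_G (N := N) a
    have habsG : ∀ x : ZMod N × ZMod N,
        ‖ExactRecovery.Gfun N a x‖ ^ 2 = (N:ℝ)^2 * ‖h x‖ ^ 2 :=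
      fun x => by rw [← hext x, norm_mul, Complex.norm_natCast, mul_pow]
    have hl : ∑ x : ZMod N × ZMod N,
        ExactRecovery.Gfun N a x * (starRingEnd ℂ) (ExactRecovery.Gfun N a x)
        = (((N:ℝ)^2 * SB : ℝ) : ℂ) := by
      simp_rw [of1, habsG]
      rw [hSB_def]
      push_cast
      rw [Finset.mul_sum]
    have hr : ∑ t : ZMod N, a t * (starRingEnd ℂ) (a t) = ((A : ℝ) : ℂ) := by
      simp_rw [of1]
      rw [hA_def]
      push_cast
      rfl
    rw [hl, hr] at hG
    have hcast : (N:ℝ)^2 * SB = (N:ℝ)^2 * A := by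
      exact_mod_cast hG
    have hN2 : ((N:ℝ)^2) ≠ 0 := by positivity
    exact mul_left_cancel₀ hN2 hcast
  -- fourth moment
  have P4 : (N:ℝ)^4 * S4 ≤ (N:ℝ)^2 * (D * A^2) := by
    have hG := ExactRecovery.fourth_G (N := N) a
    have habsG : ∀ x : ZMod N × ZMod N,
        ‖ExactRecovery.Gfun N a x * ExactRecovery.Gfun N a x‖ ^ 2
          = (N:ℝ)^4 * ‖h x‖ ^ 4 := fun x => by
      rw [norm_mul, ← hext x, norm_mul, Complex.norm_natCast]
      ring
    have hl : ∑ x : ZMod N × ZMod N,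
        (ExactRecovery.Gfun N a x * ExactRecovery.Gfun N a x) *
          (starRingEnd ℂ) (ExactRecovery.Gfun N a x * ExactRecovery.Gfun N a x)
        = (((N:ℝ)^4 * S4 : ℝ) : ℂ) := by
      simp_rw [of1, habsG]
      rw [hS4_def]
      push_cast
      rw [Finset.mul_sum]
    rw [hl] at hG
    have habs : (N:ℝ)^4 * S4 = ‖(N:ℂ)^2 * ∑ p ∈ ExactRecovery.quadS N,
        (a p.1.1 * a p.1.2) * (starRingEnd ℂ) (a p.2.1 * a p.2.2)‖ := by
      rw [← hG, Complex.norm_real, Real.norm_eq_abs, abs_of_nonneg (by positivity)]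
    rw [habs, norm_mul, norm_pow, Complex.norm_natCast]
    have hsum : ‖∑ p ∈ ExactRecovery.quadS N,
        (a p.1.1 * a p.1.2) * (starRingEnd ℂ) (a p.2.1 * a p.2.2)‖ ≤ D * A^2 := by
      calc ‖∑ p ∈ ExactRecovery.quadS N,
            (a p.1.1 * a p.1.2) * (starRingEnd ℂ) (a p.2.1 * a p.2.2)‖
          ≤ ∑ p ∈ ExactRecovery.quadS N,
              ‖(a p.1.1 * a p.1.2) * (starRingEnd ℂ) (a p.2.1 * a p.2.2)‖ :=
            norm_sum_le _ _
        _ = ∑ p ∈ ExactRecovery.quadS N, ‖a p.1.1‖ * ‖a p.1.2‖ *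
              ‖a p.2.1‖ * ‖a p.2.2‖ := by
            refine Finset.sum_congr rfl fun p _ => ?_
            rw [norm_mul, norm_mul, Complex.norm_conj, norm_mul]
            ring
        _ ≤ D * (∑ t : ZMod N, ‖a t‖ ^ 2) ^ 2 :=
            ExactRecovery.energy_bound hsf (fun t => ‖a t‖)
        _ = D * A^2 := by rw [← hA_def]
    exact mul_le_mul_of_nonneg_left hsum (by positivity)
  -- Cauchy-Schwarz on the support
  set E := ((Function.support h).toFinite.toFinset : Finset (ZMod N × ZMod N)) with hE_def
  have hCS : A^2 ≤ E.card * S4 := by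
    have hSBE : SB = ∑ x ∈ E, ‖h x‖ ^ 2 := by
      rw [hSB_def]
      refine (Finset.sum_subset (Finset.subset_univ E) fun x _ hx => ?_).symm
      have : h x = 0 := by
        by_contra hc
        exact hx ((Function.support h).toFinite.mem_toFinset.2 hc)
      rw [this]
      simp
    have hcs := Finset.sum_mul_sq_le_sq_mul_sq E (fun _ => (1:ℝ))
      (fun x => ‖h x‖ ^ 2)
    simp only [one_pow, one_mul] at hcs
    have hsum4 : ∑ x ∈ E, (‖h x‖ ^ 2) ^ 2 ≤ S4 := by
      have e1 : ∀ x : ZMod N × ZMod N, (‖h x‖ ^ 2) ^ 2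
          = ‖h x‖ ^ 4 := fun x => by ring
      simp_rw [e1, hS4_def]
      exact Finset.sum_le_sum_of_subset_of_nonneg (Finset.subset_univ E)
        (fun x _ _ => by positivity)
    calc A^2 = SB^2 := by rw [P2]
      _ = (∑ x ∈ E, ‖h x‖ ^ 2)^2 := by rw [hSBE]
      _ ≤ (∑ _x ∈ E, (1:ℝ)) * ∑ x ∈ E, (‖h x‖ ^ 2) ^ 2 := hcs
      _ ≤ E.card * S4 := by
          rw [Finset.sum_const, nsmul_eq_mul, mul_one]
          exact mul_le_mul_of_nonneg_left hsum4 (by positivity)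
  -- A is positive
  have hA0 : 0 < A := by
    rw [← P2, hSB_def]
    obtain ⟨x0, hx0⟩ := Function.ne_iff.1 hh
    refine Finset.sum_pos' (fun x _ => by positivity) ⟨x0, Finset.mem_univ x0, ?_⟩
    have hx0' : h x0 ≠ 0 := hx0
    exact pow_pos (norm_pos_iff.2 hx0') 2
  -- main inequality N² ≤ |E| * D
  have hmain : (N:ℝ)^2 ≤ E.card * D := by
    have c1 : (N:ℝ)^2 * ((N:ℝ)^2 * A^2) ≤ (E.card * D) * ((N:ℝ)^2 * A^2) := by
      calc (N:ℝ)^2 * ((N:ℝ)^2 * A^2) = (N:ℝ)^4 * A^2 := by ring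
        _ ≤ (N:ℝ)^4 * (E.card * S4) := by
            exact mul_le_mul_of_nonneg_left hCS (by positivity)
        _ = (E.card : ℝ) * ((N:ℝ)^4 * S4) := by ring
        _ ≤ (E.card : ℝ) * ((N:ℝ)^2 * (D * A^2)) := by
            exact mul_le_mul_of_nonneg_left P4 (by positivity)
        _ = (E.card * D) * ((N:ℝ)^2 * A^2) := by ring
    exact le_of_mul_le_mul_right c1 (by positivity)
  -- support size bound
  have hE : (E.card : ℝ) < (N:ℝ) ^ ((2:ℝ) - 2*ε) / ((2:ℝ) ^ (B + 1)) ^ 8 := by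
    refine lt_of_le_of_lt ?_ hsize
    have hsub : Function.support h ⊆ Function.support f ∪ Function.support g := by
      rw [hh_def]
      exact Function.support_sub f g
    have h1 : E.card = (Function.support h).ncard :=
      (Set.ncard_eq_toFinset_card _ (Function.support h).toFinite).symm
    have h2 : (Function.support h).ncard ≤
        (Function.support f).ncard + (Function.support g).ncard :=
      (Set.ncard_le_ncard hsub (Set.toFinite _)).trans (Set.ncard_union_le _ _)
    rw [h1]
    exact_mod_cast h2
  -- divisor bound
  have hD : D ≤ (2:ℝ) ^ (B + 1) * (N:ℝ) ^ (2*ε) := by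
    have hb := hB N (NeZero.ne N) hsf
    calc D = 2 * (2:ℝ) ^ N.primeFactors.card := by rw [hD_def]; ring
      _ ≤ 2 * ((2:ℝ) ^ B * (N:ℝ) ^ (2*ε)) := by linarith
      _ = (2:ℝ) ^ (B + 1) * (N:ℝ) ^ (2*ε) := by ring
  -- final contradiction
  set C : ℝ := (2:ℝ) ^ (B + 1) with hC_def
  have hC1 : (1:ℝ) ≤ C := one_le_pow₀ one_le_two
  have hCpos : (0:ℝ) < C := by positivity
  have hDpos : (0:ℝ) < D := by rw [hD_def]; positivity
  have final : (N:ℝ)^2 < (N:ℝ)^2 := by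
    calc (N:ℝ)^2 ≤ E.card * D := hmain
      _ < ((N:ℝ) ^ ((2:ℝ) - 2*ε) / C ^ 8) * D := mul_lt_mul_of_pos_right hE hDpos
      _ ≤ ((N:ℝ) ^ ((2:ℝ) - 2*ε) / C ^ 8) * (C * (N:ℝ) ^ (2*ε)) := by
          refine mul_le_mul_of_nonneg_left hD ?_
          have : (0:ℝ) ≤ (N:ℝ) ^ ((2:ℝ) - 2*ε) := Real.rpow_nonneg hN0.le _
          positivity
      _ = ((N:ℝ) ^ ((2:ℝ) - 2*ε) * (N:ℝ) ^ (2*ε)) * (C / C ^ 8) := by ring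
      _ = (N:ℝ) ^ (2:ℝ) * (C / C ^ 8) := by
          rw [← Real.rpow_add hN0]
          norm_num
      _ ≤ (N:ℝ) ^ (2:ℝ) * 1 := by
          refine mul_le_mul_of_nonneg_left ?_ (Real.rpow_nonneg hN0.le _)
          rw [div_le_one (by positivity)]
          calc C = C ^ 1 := (pow_one C).symm
            _ ≤ C ^ 8 := pow_le_pow_right₀ hC1 (by norm_num)
      _ = (N:ℝ)^2 := by rw [mul_one, Real.rpow_two]
  exact absurd final (lt_irrefl _)
end

section
/- For every ε > 0 there exists a constant C_ε > 0 such that the following holds for every squarefree positive integer N. Let f : (ℤ/Nℤ)² → ℂ be supported in a set E ⊆ (ℤ/Nℤ)² with |E| < (1/4) · N^{2−4ε} / C_ε⁴, and let Σ = {(t, t²) : t ∈ ℤ/Nℤ} be the parabola. If g : (ℤ/Nℤ)² → ℂ satisfies ĝ(m) = f̂(m) for all m ∉ Σ and g minimizes the ℓ¹ norm among all such functions (i.e., Σ_x |g(x)| ≤ Σ_x |u(x)| for every u : (ℤ/Nℤ)² → ℂ with û(m) = f̂(m) for all m ∉ Σ), then g = f. -/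
open scoped BigOperators
open Finset Complex


namespace LoganAux

variable {N : ℕ} [NeZero N]

noncomputable def psi (N : ℕ) [NeZero N] : AddChar (ZMod N) ℂ := ZMod.stdAddChar

lemma psi_kernel (a : ZMod N) :
    Complex.exp (-2 * Real.pi * Complex.I * ((a.val : ℕ) : ℂ) / (N : ℂ))
      = psi N (-a) := by
  have h1 : (-a : ZMod N) = ((-(a.val : ℤ) : ℤ) : ZMod N) := by
    push_cast
    rw [ZMod.natCast_zmod_val]
  rw [psi, h1, ZMod.stdAddChar_coe]
  congr 1
  push_cast
  ring

lemma psi_conj (a : ZMod N) : (starRingEnd ℂ) (psi N a) = psi N (-a) := by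
  rw [psi, ZMod.stdAddChar_apply, ZMod.stdAddChar_apply, AddChar.map_neg_eq_inv]
  simp [← Circle.coe_inv_eq_conj]

lemma orth1 (c : ZMod N) :
    ∑ x : ZMod N, psi N (x * c) = if c = 0 then (N : ℂ) else 0 := by
  classical
  have := AddChar.sum_mulShift c (ZMod.isPrimitive_stdAddChar N)
  simpa [psi, ZMod.card] using this

lemma orth2 (c : ZMod N × ZMod N) :
    ∑ x : ZMod N × ZMod N, psi N (x.1 * c.1 + x.2 * c.2)
      = if c = 0 then (N : ℂ) ^ 2 else 0 := by
  classical
  rw [Fintype.sum_prod_type]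
  have h0 : ∑ x1 : ZMod N, ∑ x2 : ZMod N, psi N (x1 * c.1 + x2 * c.2)
      = (∑ x1 : ZMod N, psi N (x1 * c.1)) * ∑ x2 : ZMod N, psi N (x2 * c.2) := by
    rw [Finset.sum_mul_sum]
    exact Finset.sum_congr rfl fun x1 _ => Finset.sum_congr rfl fun x2 _ =>
      (AddChar.map_add_eq_mul _ _ _)
  simp only []
  rw [h0, orth1, orth1]
  rcases eq_or_ne c 0 with h | h
  · simp [h, sq]
  · rw [if_neg h]
    rcases (not_and_or.mp (fun hc => h (Prod.ext hc.1 hc.2) : ¬((c.1 = 0) ∧ (c.2 = 0)))) with h1 | h1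
    · simp [h1]
    · simp [h1]


lemma key_sum {ι : Type} [Fintype ι] (d : ι → ℂ) (V : ι → ZMod N × ZMod N) :
    ∑ x : ZMod N × ZMod N,
      (∑ p, d p * psi N (x.1 * (V p).1 + x.2 * (V p).2)) *
        (starRingEnd ℂ) (∑ q, d q * psi N (x.1 * (V q).1 + x.2 * (V q).2))
    = (N : ℂ) ^ 2 * ∑ p, ∑ q,
        (if V p = V q then d p * (starRingEnd ℂ) (d q) else 0) := by
  classical
  have step1 : ∀ x : ZMod N × ZMod N,
      (∑ p, d p * psi N (x.1 * (V p).1 + x.2 * (V p).2)) *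
        (starRingEnd ℂ) (∑ q, d q * psi N (x.1 * (V q).1 + x.2 * (V q).2))
      = ∑ p, ∑ q, (d p * (starRingEnd ℂ) (d q)) *
          psi N (x.1 * ((V p).1 - (V q).1) + x.2 * ((V p).2 - (V q).2)) := by
    intro x
    rw [map_sum, Finset.sum_mul_sum]
    refine Finset.sum_congr rfl fun p _ => Finset.sum_congr rfl fun q _ => ?_
    rw [map_mul, psi_conj, mul_mul_mul_comm, ← AddChar.map_add_eq_mul]
    congr 2
    ring
  rw [Finset.sum_congr rfl fun x _ => step1 x, Finset.sum_comm, Finset.mul_sum]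
  refine Finset.sum_congr rfl fun p _ => ?_
  rw [Finset.sum_comm, Finset.mul_sum]
  refine Finset.sum_congr rfl fun q _ => ?_
  rw [← Finset.mul_sum, orth2 (((V p).1 - (V q).1, (V p).2 - (V q).2))]
  by_cases h : V p = V q
  · rw [if_pos h, if_pos (by rw [h]; simp [Prod.ext_iff])]
    ring
  · rw [if_neg h, if_neg, mul_zero, mul_zero]
    intro hc
    exact h (Prod.ext (sub_eq_zero.mp (congrArg Prod.fst hc))
      (sub_eq_zero.mp (congrArg Prod.snd hc)))

lemma dft_eq (h : ZMod N × ZMod N → ℂ) (m : ZMod N × ZMod N) :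
    dft N h m = (N : ℂ)⁻¹ * ∑ y : ZMod N × ZMod N,
      h y * psi N (-(y.1 * m.1 + y.2 * m.2)) := by
  rw [dft]
  congr 1
  exact Finset.sum_congr rfl fun y _ => by rw [psi_kernel]

lemma inversion (h : ZMod N × ZMod N → ℂ) (x : ZMod N × ZMod N) :
    h x = (N : ℂ)⁻¹ * ∑ m : ZMod N × ZMod N,
      dft N h m * psi N (x.1 * m.1 + x.2 * m.2) := by
  classical
  have hN : (N : ℂ) ≠ 0 := Nat.cast_ne_zero.mpr (NeZero.ne N)
  have step : ∀ m : ZMod N × ZMod N,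
      dft N h m * psi N (x.1 * m.1 + x.2 * m.2)
      = (N : ℂ)⁻¹ * ∑ y : ZMod N × ZMod N,
          h y * psi N (m.1 * (x.1 - y.1) + m.2 * (x.2 - y.2)) := by
    intro m
    rw [dft_eq, mul_assoc, Finset.sum_mul]
    congr 1
    refine Finset.sum_congr rfl fun y _ => ?_
    rw [mul_assoc, ← AddChar.map_add_eq_mul]
    congr 2
    ring
  rw [Finset.sum_congr rfl fun m _ => step m, ← Finset.mul_sum, Finset.sum_comm]
  have inner : ∀ y : ZMod N × ZMod N,
      ∑ m : ZMod N × ZMod N, h y * psi N (m.1 * (x.1 - y.1) + m.2 * (x.2 - y.2))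
      = h y * (if ((x.1 - y.1, x.2 - y.2) : ZMod N × ZMod N) = 0 then (N : ℂ) ^ 2 else 0) := by
    intro y
    rw [← Finset.mul_sum, orth2 ((x.1 - y.1, x.2 - y.2))]
  rw [Finset.sum_congr rfl fun y _ => inner y]
  have collapse : ∑ y : ZMod N × ZMod N,
      h y * (if ((x.1 - y.1, x.2 - y.2) : ZMod N × ZMod N) = 0 then (N : ℂ) ^ 2 else 0)
      = h x * (N : ℂ) ^ 2 := by
    rw [Finset.sum_eq_single x]
    · simp
    · intro y _ hyx
      rw [if_neg, mul_zero]
      intro hc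
      exact hyx (by
        have h1 := sub_eq_zero.mp (congrArg Prod.fst hc)
        have h2 := sub_eq_zero.mp (congrArg Prod.snd hc)
        exact Prod.ext h1.symm h2.symm)
    · intro hx
      exact absurd (Finset.mem_univ x) hx
  rw [collapse, pow_two, eq_comm]
  field_simp

omit [NeZero N] in
lemma parabola_inj : Function.Injective (fun t : ZMod N => ((t, t ^ 2) : ZMod N × ZMod N)) :=
  fun _ _ hts => congrArg Prod.fst hts

lemma rep (h : ZMod N × ZMod N → ℂ)
    (hsupp : ∀ m : ZMod N × ZMod N, m ∉ parabola N → dft N h m = 0)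
    (x : ZMod N × ZMod N) :
    h x = ∑ t : ZMod N,
      ((N : ℂ)⁻¹ * dft N h (t, t ^ 2)) * psi N (x.1 * t + x.2 * t ^ 2) := by
  classical
  rw [inversion h x]
  rw [← Finset.sum_subset (Finset.subset_univ (parabola N))
    (fun m _ hm => by rw [hsupp m hm, zero_mul])]
  rw [parabola, Finset.sum_image (fun _ _ _ _ hts => parabola_inj hts), Finset.mul_sum]
  exact Finset.sum_congr rfl fun t _ => by ring

lemma zmod_eq_zero_of_primes (hN : Squarefree N) (x : ZMod N)
    (h : ∀ p ∈ N.primeFactors, p ∣ x.val) : x = 0 := by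
  have hd : (∏ p ∈ N.primeFactors, p) ∣ x.val :=
    Finset.prod_primes_dvd _ (fun p hp => (Nat.prime_of_mem_primeFactors hp).prime) h
  rw [Nat.prod_primeFactors_of_squarefree hN] at hd
  exact (ZMod.val_eq_zero x).mp (Nat.eq_zero_of_dvd_of_lt hd (ZMod.val_lt x))

lemma root_count (hN : Squarefree N) (a b : ZMod N) :
    (Finset.univ.filter fun u : ZMod N => 2 * (u - a) * (u - b) = 0).card
      ≤ 2 ^ N.primeFactors.card * 2 := by
  classical
  have hcard : (N.primeFactors.powerset ×ˢ Finset.range 2).card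
      = 2 ^ N.primeFactors.card * 2 := by
    rw [Finset.card_product, Finset.card_powerset, Finset.card_range]
  rw [← hcard]
  apply Finset.card_le_card_of_injOn
    (fun u => (N.primeFactors.filter (fun p => p ∣ (u - a).val), (u - a).val % 2))
  · intro u _
    exact Finset.mem_product.mpr ⟨Finset.mem_powerset.mpr (Finset.filter_subset _ _),
      Finset.mem_range.mpr (Nat.mod_lt _ (by norm_num))⟩
  · intro u hu u' hu' heq
    have hu2 : 2 * (u - a) * (u - b) = 0 := (Finset.mem_filter.mp hu).2
    have hu2' : 2 * (u' - a) * (u' - b) = 0 := (Finset.mem_filter.mp hu').2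
    have hfil : N.primeFactors.filter (fun p => p ∣ (u - a).val)
        = N.primeFactors.filter (fun p => p ∣ (u' - a).val) := congrArg Prod.fst heq
    have hpar : (u - a).val % 2 = (u' - a).val % 2 := congrArg Prod.snd heq
    have key : ∀ p ∈ N.primeFactors, p ∣ (u - u').val := by
      intro p hp
      have hpN : p ∣ N := Nat.dvd_of_mem_primeFactors hp
      have hprime : p.Prime := Nat.prime_of_mem_primeFactors hp
      haveI : NeZero p := ⟨hprime.ne_zero⟩
      haveI := Fact.mk hprime
      set φ := ZMod.castHom hpN (ZMod p) with hφ
      have phival : ∀ y : ZMod N, φ y = ((y.val : ℕ) : ZMod p) := by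
        intro y
        rw [hφ, ZMod.castHom_apply, ← ZMod.natCast_val]
      have phizero : ∀ y : ZMod N, φ y = 0 ↔ p ∣ y.val := by
        intro y
        rw [phival y, ZMod.natCast_eq_zero_iff]
      suffices hsuff : φ u = φ u' by
        rw [← ZMod.natCast_eq_zero_iff, ← phival, map_sub, hsuff, sub_self]
      by_cases h2 : p = 2
      · subst h2
        have e1 : φ (u - a) = φ (u' - a) := by
          rw [phival, phival, ← ZMod.natCast_mod (u - a).val 2,
            ← ZMod.natCast_mod (u' - a).val 2, hpar]
        have := e1
        rw [map_sub, map_sub] at this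
        linear_combination this
      · have h2' : (2 : ZMod p) ≠ 0 := by
          intro hcon
          have : ((2 : ℕ) : ZMod p) = 0 := by exact_mod_cast hcon
          rw [ZMod.natCast_eq_zero_iff] at this
          exact h2 ((Nat.prime_dvd_prime_iff_eq hprime Nat.prime_two).mp this)
        have hiff : p ∣ (u - a).val ↔ p ∣ (u' - a).val := by
          constructor <;> intro hd
          · have hm : p ∈ N.primeFactors.filter (fun p => p ∣ (u - a).val) :=
              Finset.mem_filter.mpr ⟨hp, hd⟩
            rw [hfil] at hm
            exact (Finset.mem_filter.mp hm).2
          · have hm : p ∈ N.primeFactors.filter (fun p => p ∣ (u' - a).val) :=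
              Finset.mem_filter.mpr ⟨hp, hd⟩
            rw [← hfil] at hm
            exact (Finset.mem_filter.mp hm).2
        have hsplit : ∀ v : ZMod N, 2 * (v - a) * (v - b) = 0 →
            φ (v - a) = 0 ∨ φ (v - b) = 0 := by
          intro v hv
          have : φ (2 * (v - a) * (v - b)) = 0 := by rw [hv, map_zero]
          rw [map_mul, map_mul, map_ofNat] at this
          rcases mul_eq_zero.mp this with h' | h'
          · rcases mul_eq_zero.mp h' with h'' | h''
            · exact absurd h'' h2'
            · exact Or.inl h''
          · exact Or.inr h'
        by_cases hda : p ∣ (u - a).val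
        · have e1 : φ (u - a) = 0 := (phizero _).mpr hda
          have e2 : φ (u' - a) = 0 := (phizero _).mpr (hiff.mp hda)
          rw [map_sub] at e1 e2
          linear_combination e1 - e2
        · have e1 : φ (u - b) = 0 := by
            rcases hsplit u hu2 with h' | h'
            · exact absurd ((phizero _).mp h') hda
            · exact h'
          have e2 : φ (u' - b) = 0 := by
            rcases hsplit u' hu2' with h' | h'
            · exact absurd (hiff.mpr ((phizero _).mp h')) hda
            · exact h'
          rw [map_sub] at e1 e2
          linear_combination e1 - e2
    have : u - u' = 0 := zmod_eq_zero_of_primes hN _ key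
    exact sub_eq_zero.mp this

lemma pair_count (hN : Squarefree N) (p : ZMod N × ZMod N) :
    (Finset.univ.filter fun q : ZMod N × ZMod N =>
        ((q.1 + q.2, q.1 ^ 2 + q.2 ^ 2) : ZMod N × ZMod N)
          = (p.1 + p.2, p.1 ^ 2 + p.2 ^ 2)).card
      ≤ 2 ^ N.primeFactors.card * 2 := by
  classical
  refine le_trans (Finset.card_le_card_of_injOn (fun q => q.1) ?_ ?_) (root_count hN p.1 p.2)
  · intro q hq
    have hq' := (Finset.mem_filter.mp hq).2
    have H1 : q.1 + q.2 = p.1 + p.2 := congrArg Prod.fst hq'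
    have H2 : q.1 ^ 2 + q.2 ^ 2 = p.1 ^ 2 + p.2 ^ 2 := congrArg Prod.snd hq'
    refine Finset.mem_filter.mpr ⟨Finset.mem_univ _, ?_⟩
    linear_combination H2 + (q.1 - q.2 - p.1 - p.2) * H1
  · intro q hq q' hq' heq
    have H1 : q.1 + q.2 = p.1 + p.2 := congrArg Prod.fst (Finset.mem_filter.mp hq).2
    have H1' : q'.1 + q'.2 = p.1 + p.2 := congrArg Prod.fst (Finset.mem_filter.mp hq').2
    have hfst : q.1 = q'.1 := heq
    exact Prod.ext hfst (by linear_combination H1 - H1' - hfst)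

lemma omega_bound {e : ℝ} (he : 0 < e) (B : ℕ) (hB : (2:ℝ) ^ ((1:ℝ)/e) ≤ B)
    {n : ℕ} (hn : n ≠ 0) :
    (2:ℝ) ^ n.primeFactors.card ≤ 2 ^ (B+1) * (n:ℝ) ^ e := by
  classical
  set S := n.primeFactors.filter (fun p => p ≤ B) with hSdef
  set L := n.primeFactors.filter (fun p => ¬ p ≤ B) with hLdef
  have hsplit : S.card + L.card = n.primeFactors.card :=
    Finset.card_filter_add_card_filter_not _
  have hS : S.card ≤ B + 1 := by
    have : S ⊆ Finset.range (B+1) := fun p hp =>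
      Finset.mem_range.mpr (Nat.lt_succ_of_le (Finset.mem_filter.mp hp).2)
    simpa using Finset.card_le_card this
  have hL : (2:ℝ) ^ L.card ≤ (n:ℝ) ^ e := by
    have h2 : ∀ p ∈ L, (2:ℝ) ≤ (p:ℝ) ^ e := by
      intro p hp
      have hpB : B < p := Nat.lt_of_not_le (Finset.mem_filter.mp hp).2
      have hple : (2:ℝ) ^ ((1:ℝ)/e) ≤ (p:ℝ) :=
        le_trans hB (by exact_mod_cast hpB.le)
      calc (2:ℝ) = ((2:ℝ) ^ ((1:ℝ)/e)) ^ e := by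
            rw [← Real.rpow_mul (by norm_num), one_div_mul_cancel he.ne', Real.rpow_one]
        _ ≤ (p:ℝ) ^ e := Real.rpow_le_rpow (Real.rpow_nonneg (by norm_num) _) hple he.le
    have hprod : (∏ p ∈ L, (p:ℝ)) ^ e ≤ (n:ℝ) ^ e := by
      apply Real.rpow_le_rpow (Finset.prod_nonneg fun p _ => Nat.cast_nonneg p) _ he.le
      rw [← Nat.cast_prod]
      have hdvd : (∏ p ∈ L, p) ∣ n :=
        dvd_trans (Finset.prod_dvd_prod_of_subset _ _ _ (Finset.filter_subset _ _))
          (Nat.prod_primeFactors_dvd n)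
      exact_mod_cast Nat.le_of_dvd (Nat.pos_of_ne_zero hn) hdvd
    calc (2:ℝ) ^ L.card = ∏ _p ∈ L, (2:ℝ) := by rw [Finset.prod_const]
      _ ≤ ∏ p ∈ L, (p:ℝ) ^ e :=
          Finset.prod_le_prod (fun _ _ => by norm_num) h2
      _ = (∏ p ∈ L, (p:ℝ)) ^ e :=
          Real.finset_prod_rpow L _ (fun p _ => Nat.cast_nonneg p) e
      _ ≤ (n:ℝ) ^ e := hprod
  calc (2:ℝ) ^ n.primeFactors.card = 2 ^ S.card * 2 ^ L.card := by
        rw [← pow_add, hsplit]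
    _ ≤ 2 ^ (B+1) * (n:ℝ) ^ e := by
        apply mul_le_mul _ hL (by positivity) (by positivity)
        exact pow_le_pow_right₀ (by norm_num) hS

lemma parseval (h : ZMod N × ZMod N → ℂ) (c : ZMod N → ℂ)
    (hrep : ∀ x : ZMod N × ZMod N, h x = ∑ t : ZMod N, c t * psi N (x.1 * t + x.2 * t ^ 2)) :
    ∑ x : ZMod N × ZMod N, (‖h x‖) ^ 2
      = (N : ℝ) ^ 2 * ∑ t : ZMod N, (‖c t‖) ^ 2 := by
  classical
  have key := key_sum (N := N) c (fun t => ((t, t ^ 2) : ZMod N × ZMod N))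
  simp only [] at key
  have lhs_eq : ∑ x : ZMod N × ZMod N,
      (∑ p : ZMod N, c p * psi N (x.1 * p + x.2 * p ^ 2)) *
        (starRingEnd ℂ) (∑ q : ZMod N, c q * psi N (x.1 * q + x.2 * q ^ 2))
      = ((∑ x : ZMod N × ZMod N, (‖h x‖) ^ 2 : ℝ) : ℂ) := by
    push_cast
    refine Finset.sum_congr rfl fun x _ => ?_
    rw [← hrep x, Complex.mul_conj, ← Complex.sq_norm]
    push_cast
    ring
  have rhs_eq : (∑ p : ZMod N, ∑ q : ZMod N,
      (if ((p, p ^ 2) : ZMod N × ZMod N) = (q, q ^ 2) then c p * (starRingEnd ℂ) (c q) else 0))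
      = ((∑ t : ZMod N, (‖c t‖) ^ 2 : ℝ) : ℂ) := by
    push_cast
    refine Finset.sum_congr rfl fun p _ => ?_
    have hcongr : ∀ q : ZMod N, (if ((p, p ^ 2) : ZMod N × ZMod N) = (q, q ^ 2)
        then c p * (starRingEnd ℂ) (c q) else 0)
        = (if q = p then c p * (starRingEnd ℂ) (c q) else 0) := by
      intro q
      refine if_congr ⟨fun hq => (parabola_inj hq).symm, fun hq => by rw [hq]⟩ rfl rfl
    rw [Finset.sum_congr rfl fun q _ => hcongr q, Finset.sum_ite_eq' Finset.univ p
      (fun q => c p * (starRingEnd ℂ) (c q)), if_pos (Finset.mem_univ p),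
      Complex.mul_conj, ← Complex.sq_norm]
    push_cast
    ring
  rw [lhs_eq, rhs_eq] at key
  have key2 : ((∑ x : ZMod N × ZMod N, (‖h x‖) ^ 2 : ℝ) : ℂ)
      = (((N : ℝ) ^ 2 * ∑ t : ZMod N, (‖c t‖) ^ 2 : ℝ) : ℂ) := by
    rw [key]
    push_cast
    ring
  exact_mod_cast key2

lemma sq_rep (h : ZMod N × ZMod N → ℂ) (c : ZMod N → ℂ)
    (hrep : ∀ x : ZMod N × ZMod N, h x = ∑ t : ZMod N, c t * psi N (x.1 * t + x.2 * t ^ 2))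
    (x : ZMod N × ZMod N) :
    h x * h x = ∑ p : ZMod N × ZMod N,
      (c p.1 * c p.2) * psi N (x.1 * (p.1 + p.2) + x.2 * (p.1 ^ 2 + p.2 ^ 2)) := by
  rw [hrep x, Finset.sum_mul_sum, ← Fintype.sum_prod_type']
  apply Fintype.sum_congr
  intro p
  rw [mul_mul_mul_comm, ← AddChar.map_add_eq_mul]
  congr 2
  ring

lemma l4_bound (hNsf : Squarefree N) (h : ZMod N × ZMod N → ℂ) (c : ZMod N → ℂ)
    (hrep : ∀ x : ZMod N × ZMod N, h x = ∑ t : ZMod N, c t * psi N (x.1 * t + x.2 * t ^ 2)) :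
    ∑ x : ZMod N × ZMod N, (‖h x‖) ^ 4
      ≤ (N : ℝ) ^ 2 * (2 ^ N.primeFactors.card * 2) *
        (∑ t : ZMod N, (‖c t‖) ^ 2) ^ 2 := by
  classical
  set d : ZMod N × ZMod N → ℂ := fun p => c p.1 * c p.2 with hd
  set V : ZMod N × ZMod N → ZMod N × ZMod N :=
    fun p => (p.1 + p.2, p.1 ^ 2 + p.2 ^ 2) with hV
  set M : ℝ := (2 ^ N.primeFactors.card * 2 : ℝ) with hM
  set A1 : ℝ := ∑ t : ZMod N, (‖c t‖) ^ 2 with hA1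
  have key := key_sum (N := N) d V
  have lhs_eq : ∑ x : ZMod N × ZMod N,
      (∑ p, d p * psi N (x.1 * (V p).1 + x.2 * (V p).2)) *
        (starRingEnd ℂ) (∑ q, d q * psi N (x.1 * (V q).1 + x.2 * (V q).2))
      = ((∑ x : ZMod N × ZMod N, (‖h x‖) ^ 4 : ℝ) : ℂ) := by
    push_cast
    refine Finset.sum_congr rfl fun x _ => ?_
    have h2 := sq_rep h c hrep x
    have hVsimp : ∀ p : ZMod N × ZMod N,
        d p * psi N (x.1 * (V p).1 + x.2 * (V p).2)
        = (c p.1 * c p.2) * psi N (x.1 * (p.1 + p.2) + x.2 * (p.1 ^ 2 + p.2 ^ 2)) := by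
      intro p
      simp [hd, hV]
    rw [Finset.sum_congr rfl fun p _ => hVsimp p, ← h2,
      Complex.mul_conj, ← Complex.sq_norm, norm_mul]
    push_cast
    ring
  rw [lhs_eq] at key
  set Z : ℂ := ∑ p, ∑ q, (if V p = V q then d p * (starRingEnd ℂ) (d q) else 0) with hZ
  have habs : ∑ x : ZMod N × ZMod N, (‖h x‖) ^ 4
      = (N:ℝ) ^ 2 * ‖Z‖ := by
    have h0 : ((∑ x : ZMod N × ZMod N, (‖h x‖) ^ 4 : ℝ)) 
        = ‖(N : ℂ) ^ 2 * Z‖ := by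
      rw [← key, Complex.norm_real, Real.norm_eq_abs]
      exact (_root_.abs_of_nonneg (by positivity)).symm
    rw [h0, norm_mul, norm_pow, Complex.norm_natCast]
  have step1 : ‖Z‖ ≤ ∑ p, ∑ q,
      (if V q = V p then ‖d p‖ * ‖d q‖ else 0) := by
    refine le_trans (norm_sum_le _ _) (Finset.sum_le_sum fun p _ => ?_)
    refine le_trans (norm_sum_le _ _) (Finset.sum_le_sum fun q _ => ?_)
    rw [apply_ite (norm : ℂ → ℝ), norm_zero, norm_mul, Complex.norm_conj]
    by_cases hpq : V p = V q
    · rw [if_pos hpq, if_pos hpq.symm]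
    · rw [if_neg hpq, if_neg (fun hc => hpq hc.symm)]
  set S : ℝ := ∑ p, ∑ q, (if V q = V p then (‖d p‖) ^ 2 else 0) with hS
  have swap : ∑ p, ∑ q, (if V q = V p then (‖d q‖) ^ 2 else 0) = S := by
    rw [Finset.sum_comm, hS]
    refine Finset.sum_congr rfl fun p _ => Finset.sum_congr rfl fun q _ => ?_
    exact if_congr eq_comm rfl rfl
  have step2 : 2 * (∑ p, ∑ q,
      (if V q = V p then ‖d p‖ * ‖d q‖ else 0)) ≤ 2 * S := by
    have expand : ∀ p q : ZMod N × ZMod N,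
        2 * (if V q = V p then ‖d p‖ * ‖d q‖ else 0)
        ≤ (if V q = V p then (‖d p‖) ^ 2 else 0)
          + (if V q = V p then (‖d q‖) ^ 2 else 0) := by
      intro p q
      by_cases hpq : V q = V p
      · rw [if_pos hpq, if_pos hpq, if_pos hpq]
        nlinarith [sq_nonneg (‖d p‖ - ‖d q‖)]
      · rw [if_neg hpq, if_neg hpq, if_neg hpq]
        norm_num
    calc 2 * (∑ p, ∑ q, (if V q = V p then ‖d p‖ * ‖d q‖ else 0))
        = ∑ p, ∑ q, 2 * (if V q = V p then ‖d p‖ * ‖d q‖ else 0) := by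
          rw [Finset.mul_sum]
          exact Finset.sum_congr rfl fun p _ => Finset.mul_sum _ _ _
      _ ≤ ∑ p, ∑ q, ((if V q = V p then (‖d p‖) ^ 2 else 0)
          + (if V q = V p then (‖d q‖) ^ 2 else 0)) :=
          Finset.sum_le_sum fun p _ => Finset.sum_le_sum fun q _ => expand p q
      _ = S + ∑ p, ∑ q, (if V q = V p then (‖d q‖) ^ 2 else 0) := by
          rw [← Finset.sum_add_distrib]
          refine Finset.sum_congr rfl fun p _ => ?_
          rw [← Finset.sum_add_distrib]
      _ = 2 * S := by rw [swap]; ring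
  have step2' : ∑ p, ∑ q,
      (if V q = V p then ‖d p‖ * ‖d q‖ else 0) ≤ S := by
    linarith
  have count : ∀ p : ZMod N × ZMod N,
      ∑ q, (if V q = V p then (‖d p‖) ^ 2 else 0)
        ≤ M * (‖d p‖) ^ 2 := by
    intro p
    rw [← Finset.sum_filter, Finset.sum_const, nsmul_eq_mul]
    apply mul_le_mul_of_nonneg_right _ (by positivity)
    rw [hM]
    have hc := pair_count hNsf p
    have : (Finset.univ.filter fun q : ZMod N × ZMod N => V q = V p)
        = (Finset.univ.filter fun q : ZMod N × ZMod N =>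
          ((q.1 + q.2, q.1 ^ 2 + q.2 ^ 2) : ZMod N × ZMod N)
            = (p.1 + p.2, p.1 ^ 2 + p.2 ^ 2)) := by
      apply Finset.filter_congr
      intro q _
      simp [hV]
    rw [this]
    exact_mod_cast hc
  have hdsum : ∑ p : ZMod N × ZMod N, (‖d p‖) ^ 2 = A1 ^ 2 := by
    rw [hA1, sq, Finset.sum_mul_sum, ← Fintype.sum_prod_type']
    apply Fintype.sum_congr
    intro p
    rw [hd]
    simp only [norm_mul]
    ring
  have hSbound : S ≤ M * A1 ^ 2 := by
    calc S ≤ ∑ p : ZMod N × ZMod N, M * (‖d p‖) ^ 2 :=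
        Finset.sum_le_sum fun p _ => count p
      _ = M * A1 ^ 2 := by rw [← Finset.mul_sum, hdsum]
  calc ∑ x : ZMod N × ZMod N, (‖h x‖) ^ 4
      = (N:ℝ) ^ 2 * ‖Z‖ := habs
    _ ≤ (N:ℝ) ^ 2 * (M * A1 ^ 2) := by
        apply mul_le_mul_of_nonneg_left _ (by positivity)
        exact le_trans step1 (le_trans step2' hSbound)
    _ = (N : ℝ) ^ 2 * M * A1 ^ 2 := by ring

end LoganAux

open LoganAux in
set_option maxHeartbeats 2000000 in
theorem logan_recovery_parabola (ε : ℝ) (hε : 0 < ε) :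
    ∃ C : ℝ, 0 < C ∧ ∀ (N : ℕ) [NeZero N], Squarefree N →
      ∀ (f : ZMod N × ZMod N → ℂ) (E : Set (ZMod N × ZMod N)),
        (∀ x : ZMod N × ZMod N, x ∉ E → f x = 0) →
        (E.ncard : ℝ) < (1 / 4) * (N : ℝ) ^ ((2 : ℝ) - 4 * ε) / C ^ 4 →
        ∀ g : ZMod N × ZMod N → ℂ,
          (∀ m : ZMod N × ZMod N, m ∉ parabola N → dft N g m = dft N f m) →
          (∀ u : ZMod N × ZMod N → ℂ,
            (∀ m : ZMod N × ZMod N, m ∉ parabola N → dft N u m = dft N f m) →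
            ∑ x : ZMod N × ZMod N, ‖g x‖ ≤
              ∑ x : ZMod N × ZMod N, ‖u x‖) →
          g = f := by
  classical
  set B : ℕ := ⌈(2:ℝ) ^ ((1:ℝ)/(4*ε))⌉₊ with hB_def
  refine ⟨(2:ℝ) ^ (B + 2), by positivity, ?_⟩
  intro N _ hNsf f E hf hEcard g hg hmin
  set C : ℝ := (2:ℝ) ^ (B + 2) with hC_def
  by_contra hgf
  have hN0 : (0:ℝ) < (N:ℝ) := by
    exact_mod_cast Nat.pos_of_ne_zero (NeZero.ne N)
  -- the difference function
  set h : ZMod N × ZMod N → ℂ := fun x => g x - f x with hh_def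
  have hdft : ∀ m : ZMod N × ZMod N, m ∉ parabola N → dft N h m = 0 := by
    intro m hm
    have hsub : dft N h m = dft N g m - dft N f m := by
      rw [dft, dft, dft, ← mul_sub, ← Finset.sum_sub_distrib]
      congr 1
      exact Finset.sum_congr rfl fun x _ => by rw [hh_def]; ring
    rw [hsub, hg m hm, sub_self]
  set c : ZMod N → ℂ := fun t => (N:ℂ)⁻¹ * dft N h (t, t ^ 2) with hc_def
  have hrep : ∀ x : ZMod N × ZMod N,
      h x = ∑ t : ZMod N, c t * psi N (x.1 * t + x.2 * t ^ 2) :=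
    fun x => rep h hdft x
  set a : ZMod N × ZMod N → ℝ := fun x => ‖h x‖ with ha_def
  have ha : ∀ x, 0 ≤ a x := fun x => norm_nonneg _
  have hEfin : E.Finite := Set.toFinite E
  set E' : Finset (ZMod N × ZMod N) := hEfin.toFinset with hE'_def
  set T : ℝ := ∑ x ∈ E', a x with hT_def
  set S1 : ℝ := ∑ x : ZMod N × ZMod N, a x with hS1_def
  set S2 : ℝ := ∑ x : ZMod N × ZMod N, a x ^ 2 with hS2_def
  set S3 : ℝ := ∑ x : ZMod N × ZMod N, a x ^ 3 with hS3_def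
  set S4 : ℝ := ∑ x : ZMod N × ZMod N, a x ^ 4 with hS4_def
  set P : ℝ := ∑ x ∈ E', a x ^ 2 with hP_def
  have hTnn : 0 ≤ T := Finset.sum_nonneg fun x _ => ha x
  have hS1nn : 0 ≤ S1 := Finset.sum_nonneg fun x _ => ha x
  have hS2nn : 0 ≤ S2 := Finset.sum_nonneg fun x _ => by positivity
  have hS4nn : 0 ≤ S4 := Finset.sum_nonneg fun x _ => by positivity
  have hPnn : 0 ≤ P := Finset.sum_nonneg fun x _ => by positivity
  have hcardnn : (0:ℝ) ≤ (E'.card : ℝ) := Nat.cast_nonneg _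
  -- ℓ¹ minimality gives concentration on E
  have hS1T : S1 ≤ 2 * T := by
    have hfe : ∑ x : ZMod N × ZMod N, ‖g x‖
        ≤ ∑ x : ZMod N × ZMod N, ‖f x‖ := hmin f (fun m _ => rfl)
    have hgsplit : ∑ x : ZMod N × ZMod N, ‖g x‖
        = ∑ x ∈ E', ‖g x‖ + ∑ x ∈ E'ᶜ, ‖g x‖ :=
      (Finset.sum_add_sum_compl E' _).symm
    have hfcompl : ∑ x ∈ E'ᶜ, ‖f x‖ = 0 := by
      refine Finset.sum_eq_zero fun x hx => ?_
      have hxE : x ∉ E := fun hc =>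
        (Finset.mem_compl.mp hx) (hEfin.mem_toFinset.mpr hc)
      rw [hf x hxE, norm_zero]
    have hfsplit : ∑ x : ZMod N × ZMod N, ‖f x‖
        = ∑ x ∈ E', ‖f x‖ := by
      rw [← Finset.sum_add_sum_compl E' (fun x => ‖f x‖), hfcompl, add_zero]
    have hgc : ∀ x ∈ E'ᶜ, ‖g x‖ = a x := by
      intro x hx
      have hxE : x ∉ E := fun hc =>
        (Finset.mem_compl.mp hx) (hEfin.mem_toFinset.mpr hc)
      rw [ha_def, hh_def]
      simp [hf x hxE]
    have hgE : ∀ x ∈ E', ‖f x‖ - a x ≤ ‖g x‖ := by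
      intro x _
      have htri : ‖f x‖ ≤ ‖g x‖ + ‖h x‖ := by
        have : f x = g x - h x := by rw [hh_def]; ring
        rw [this]
        have := norm_sub_le_norm_sub_add_norm_sub (g x) 0 (h x)
        simpa using this
      rw [ha_def]
      linarith
    have h1 : ∑ x ∈ E', ‖f x‖ - T ≤ ∑ x ∈ E', ‖g x‖ := by
      have := Finset.sum_le_sum hgE
      rw [Finset.sum_sub_distrib] at this
      linarith [this]
    have h2 : ∑ x ∈ E'ᶜ, ‖g x‖ = ∑ x ∈ E'ᶜ, a x :=
      Finset.sum_congr rfl hgc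
    have h3 : ∑ x ∈ E'ᶜ, a x ≤ T := by
      have := hfe
      rw [hgsplit, hfsplit] at this
      linarith [h1, h2, this]
    have h4 : S1 = T + ∑ x ∈ E'ᶜ, a x := by
      rw [hS1_def, hT_def, ← Finset.sum_add_sum_compl E' a]
    linarith
  -- h is nonzero somewhere
  have hx0 : ∃ x : ZMod N × ZMod N, h x ≠ 0 := by
    by_contra hc
    push_neg at hc
    exact hgf (funext fun x => by
      have := hc x
      rw [hh_def] at this
      simpa [sub_eq_zero] using this)
  have hS2pos : 0 < S2 := by
    obtain ⟨x0, hx0⟩ := hx0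
    have h1 : 0 < a x0 ^ 2 := by
      have : 0 < a x0 := norm_pos_iff.mpr hx0
      positivity
    have h2 : a x0 ^ 2 ≤ S2 :=
      Finset.single_le_sum (f := fun x => a x ^ 2)
        (fun x _ => by positivity) (Finset.mem_univ x0)
    linarith
  -- Cauchy–Schwarz chain
  have hCS1 : S2 ^ 2 ≤ S1 * S3 := by
    have hcs := Finset.sum_mul_sq_le_sq_mul_sq Finset.univ
      (fun x => Real.sqrt (a x)) (fun x => a x * Real.sqrt (a x))
    have e1 : ∑ x : ZMod N × ZMod N, Real.sqrt (a x) * (a x * Real.sqrt (a x))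
        = S2 := by
      refine Finset.sum_congr rfl fun x _ => ?_
      calc Real.sqrt (a x) * (a x * Real.sqrt (a x))
          = a x * (Real.sqrt (a x) * Real.sqrt (a x)) := by ring
        _ = a x * a x := by rw [Real.mul_self_sqrt (ha x)]
        _ = a x ^ 2 := by ring
    have e2 : ∑ x : ZMod N × ZMod N, Real.sqrt (a x) ^ 2 = S1 :=
      Finset.sum_congr rfl fun x _ => Real.sq_sqrt (ha x)
    have e3 : ∑ x : ZMod N × ZMod N, (a x * Real.sqrt (a x)) ^ 2 = S3 := by
      refine Finset.sum_congr rfl fun x _ => ?_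
      rw [mul_pow, Real.sq_sqrt (ha x)]
      ring
    rw [e1, e2, e3] at hcs
    exact hcs
  have hCS2 : S3 ^ 2 ≤ S2 * S4 := by
    have hcs := Finset.sum_mul_sq_le_sq_mul_sq Finset.univ a (fun x => a x ^ 2)
    have e1 : ∑ x : ZMod N × ZMod N, a x * a x ^ 2 = S3 :=
      Finset.sum_congr rfl fun x _ => by ring
    have e2 : ∑ x : ZMod N × ZMod N, (a x ^ 2) ^ 2 = S4 :=
      Finset.sum_congr rfl fun x _ => by ring
    rw [e1, e2] at hcs
    exact hcs
  have hCS3 : T ^ 2 ≤ (E'.card : ℝ) * P := by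
    have hcs := Finset.sum_mul_sq_le_sq_mul_sq E' (fun _ => (1:ℝ)) a
    simpa [hT_def, hP_def] using hcs
  have hCS4 : P ^ 2 ≤ (E'.card : ℝ) * ∑ x ∈ E', a x ^ 4 := by
    have hcs := Finset.sum_mul_sq_le_sq_mul_sq E' (fun _ => (1:ℝ)) (fun x => a x ^ 2)
    have e2 : ∑ x ∈ E', (a x ^ 2) ^ 2 = ∑ x ∈ E', a x ^ 4 :=
      Finset.sum_congr rfl fun x _ => by ring
    simpa [hP_def, e2] using hcs
  have hsub4 : ∑ x ∈ E', a x ^ 4 ≤ S4 :=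
    Finset.sum_le_sum_of_subset_of_nonneg (Finset.subset_univ E')
      (fun x _ _ => by positivity)
  -- Parseval and L⁴
  set A : ℝ := ∑ t : ZMod N, (‖c t‖) ^ 2 with hA_def
  set Mw : ℝ := (2:ℝ) ^ N.primeFactors.card * 2 with hMw_def
  have hMwnn : (0:ℝ) ≤ Mw := by positivity
  have hpar : S2 = (N:ℝ) ^ 2 * A := parseval h c hrep
  have hl4 : S4 ≤ (N:ℝ) ^ 2 * Mw * A ^ 2 := l4_bound hNsf h c hrep
  -- combine: S4 * N² ≤ Mw * S2²
  have hS4N : S4 * (N:ℝ) ^ 2 ≤ Mw * S2 ^ 2 := by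
    calc S4 * (N:ℝ) ^ 2 ≤ ((N:ℝ) ^ 2 * Mw * A ^ 2) * (N:ℝ) ^ 2 :=
        mul_le_mul_of_nonneg_right hl4 (by positivity)
      _ = Mw * ((N:ℝ) ^ 2 * A) ^ 2 := by ring
      _ = Mw * S2 ^ 2 := by rw [← hpar]
  -- power chain
  have hS24 : S2 ^ 4 ≤ S1 ^ 2 * (S2 * S4) := by
    calc S2 ^ 4 = (S2 ^ 2) ^ 2 := by ring
      _ ≤ (S1 * S3) ^ 2 := pow_le_pow_left₀ (sq_nonneg S2) hCS1 2
      _ = S1 ^ 2 * S3 ^ 2 := by ring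
      _ ≤ S1 ^ 2 * (S2 * S4) := mul_le_mul_of_nonneg_left hCS2 (sq_nonneg S1)
  have hS2cube : S2 ^ 3 ≤ S1 ^ 2 * S4 := by
    apply le_of_mul_le_mul_right _ hS2pos
    calc S2 ^ 3 * S2 = S2 ^ 4 := by ring
      _ ≤ S1 ^ 2 * (S2 * S4) := hS24
      _ = S1 ^ 2 * S4 * S2 := by ring
  have hT4 : T ^ 4 ≤ (E'.card : ℝ) ^ 3 * S4 := by
    calc T ^ 4 = (T ^ 2) ^ 2 := by ring
      _ ≤ ((E'.card : ℝ) * P) ^ 2 := pow_le_pow_left₀ (sq_nonneg T) hCS3 2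
      _ = (E'.card : ℝ) ^ 2 * P ^ 2 := by ring
      _ ≤ (E'.card : ℝ) ^ 2 * ((E'.card : ℝ) * S4) := by
          apply mul_le_mul_of_nonneg_left _ (sq_nonneg _)
          exact le_trans hCS4 (mul_le_mul_of_nonneg_left hsub4 hcardnn)
      _ = (E'.card : ℝ) ^ 3 * S4 := by ring
  have hS16 : S2 ^ 6 ≤ 16 * (E'.card : ℝ) ^ 3 * S4 ^ 3 := by
    calc S2 ^ 6 = (S2 ^ 3) ^ 2 := by ring
      _ ≤ (S1 ^ 2 * S4) ^ 2 := pow_le_pow_left₀ (by positivity) hS2cube 2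
      _ = S1 ^ 4 * S4 ^ 2 := by ring
      _ ≤ (2 * T) ^ 4 * S4 ^ 2 := by
          apply mul_le_mul_of_nonneg_right _ (by positivity)
          exact pow_le_pow_left₀ hS1nn hS1T 4
      _ = 16 * T ^ 4 * S4 ^ 2 := by ring
      _ ≤ 16 * ((E'.card : ℝ) ^ 3 * S4) * S4 ^ 2 := by
          apply mul_le_mul_of_nonneg_right _ (by positivity)
          linarith [hT4]
      _ = 16 * (E'.card : ℝ) ^ 3 * S4 ^ 3 := by ring
  -- key lower bound : N^6 ≤ 16 |E|³ Mw³
  have hkey : (N:ℝ) ^ 6 ≤ 16 * ((E'.card : ℝ) * Mw) ^ 3 := by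
    have hc1 : (S4 * (N:ℝ) ^ 2) ^ 3 ≤ (Mw * S2 ^ 2) ^ 3 :=
      pow_le_pow_left₀ (by positivity) hS4N 3
    have hc2 : S2 ^ 6 * (N:ℝ) ^ 6 ≤ (16 * (E'.card : ℝ) ^ 3 * S4 ^ 3) * (N:ℝ) ^ 6 :=
      mul_le_mul_of_nonneg_right hS16 (by positivity)
    have hc3 : (16 * (E'.card : ℝ) ^ 3 * S4 ^ 3) * (N:ℝ) ^ 6
        ≤ 16 * (E'.card : ℝ) ^ 3 * (Mw ^ 3 * S2 ^ 6) := by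
      have : S4 ^ 3 * (N:ℝ) ^ 6 ≤ Mw ^ 3 * S2 ^ 6 := by
        calc S4 ^ 3 * (N:ℝ) ^ 6 = (S4 * (N:ℝ) ^ 2) ^ 3 := by ring
          _ ≤ (Mw * S2 ^ 2) ^ 3 := hc1
          _ = Mw ^ 3 * S2 ^ 6 := by ring
      calc (16 * (E'.card : ℝ) ^ 3 * S4 ^ 3) * (N:ℝ) ^ 6
          = 16 * (E'.card : ℝ) ^ 3 * (S4 ^ 3 * (N:ℝ) ^ 6) := by ring
        _ ≤ 16 * (E'.card : ℝ) ^ 3 * (Mw ^ 3 * S2 ^ 6) := by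
            apply mul_le_mul_of_nonneg_left this (by have := pow_nonneg hcardnn 3; linarith)
    have hc4 : (N:ℝ) ^ 6 * S2 ^ 6 ≤ (16 * ((E'.card : ℝ) * Mw) ^ 3) * S2 ^ 6 := by
      calc (N:ℝ) ^ 6 * S2 ^ 6 = S2 ^ 6 * (N:ℝ) ^ 6 := by ring
        _ ≤ (16 * (E'.card : ℝ) ^ 3 * S4 ^ 3) * (N:ℝ) ^ 6 := hc2
        _ ≤ 16 * (E'.card : ℝ) ^ 3 * (Mw ^ 3 * S2 ^ 6) := hc3
        _ = (16 * ((E'.card : ℝ) * Mw) ^ 3) * S2 ^ 6 := by ring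
    exact le_of_mul_le_mul_right hc4 (by positivity)
  -- upper bound from the cardinality hypothesis
  have hMwB : Mw ≤ (2:ℝ) ^ (B + 2) * (N:ℝ) ^ (4 * ε) := by
    have hω := omega_bound (e := 4 * ε) (by linarith) B
      (Nat.le_ceil _) (NeZero.ne N)
    calc Mw = (2:ℝ) ^ N.primeFactors.card * 2 := hMw_def
      _ ≤ ((2:ℝ) ^ (B + 1) * (N:ℝ) ^ (4 * ε)) * 2 :=
          mul_le_mul_of_nonneg_right hω (by norm_num)
      _ = (2:ℝ) ^ (B + 2) * (N:ℝ) ^ (4 * ε) := by ring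
  have hcardE : (E'.card : ℝ) < 1 / 4 * (N:ℝ) ^ ((2:ℝ) - 4 * ε) / C ^ 4 := by
    have : E.ncard = E'.card := Set.ncard_eq_toFinset_card E hEfin
    rw [← this]
    exact hEcard
  have hprod : (E'.card : ℝ) * Mw < (N:ℝ) ^ 2 / 8 := by
    have hR : (0:ℝ) < (2:ℝ) ^ (B + 2) * (N:ℝ) ^ (4 * ε) := by positivity
    have h1 : (E'.card : ℝ) * Mw
        ≤ (E'.card : ℝ) * ((2:ℝ) ^ (B + 2) * (N:ℝ) ^ (4 * ε)) :=
      mul_le_mul_of_nonneg_left hMwB hcardnn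
    have h2 : (E'.card : ℝ) * ((2:ℝ) ^ (B + 2) * (N:ℝ) ^ (4 * ε))
        < (1 / 4 * (N:ℝ) ^ ((2:ℝ) - 4 * ε) / C ^ 4) *
          ((2:ℝ) ^ (B + 2) * (N:ℝ) ^ (4 * ε)) :=
      mul_lt_mul_of_pos_right hcardE hR
    have h3 : (1 / 4 * (N:ℝ) ^ ((2:ℝ) - 4 * ε) / C ^ 4) *
          ((2:ℝ) ^ (B + 2) * (N:ℝ) ^ (4 * ε))
        = ((N:ℝ) ^ ((2:ℝ) - 4 * ε) * (N:ℝ) ^ (4 * ε)) *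
          ((2:ℝ) ^ (B + 2) / (4 * C ^ 4)) := by
      field_simp
    have h4 : (N:ℝ) ^ ((2:ℝ) - 4 * ε) * (N:ℝ) ^ (4 * ε) = (N:ℝ) ^ 2 := by
      rw [← Real.rpow_add hN0]
      norm_num
    have h5 : (2:ℝ) ^ (B + 2) / (4 * C ^ 4) ≤ 1 / 8 := by
      rw [hC_def, ← pow_mul, div_le_div_iff₀ (by positivity) (by norm_num)]
      have hexp : B + 2 + 5 ≤ (B + 2) * 4 := by omega
      have hpp : (0:ℝ) ≤ (2:ℝ) ^ ((B + 2) * 4) := by positivity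
      calc (2:ℝ) ^ (B + 2) * 8 = (2:ℝ) ^ (B + 2 + 5) / 4 := by
            rw [pow_add]; ring
        _ ≤ (2:ℝ) ^ ((B + 2) * 4) / 4 := by
            have := pow_le_pow_right₀ (one_le_two : (1:ℝ) ≤ 2) hexp
            linarith
        _ ≤ 1 * (4 * (2:ℝ) ^ ((B + 2) * 4)) := by linarith
    calc (E'.card : ℝ) * Mw
        < ((N:ℝ) ^ ((2:ℝ) - 4 * ε) * (N:ℝ) ^ (4 * ε)) *
          ((2:ℝ) ^ (B + 2) / (4 * C ^ 4)) := by rw [← h3]; exact lt_of_le_of_lt h1 h2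
      _ = (N:ℝ) ^ 2 * ((2:ℝ) ^ (B + 2) / (4 * C ^ 4)) := by rw [h4]
      _ ≤ (N:ℝ) ^ 2 * (1 / 8) := mul_le_mul_of_nonneg_left h5 (by positivity)
      _ = (N:ℝ) ^ 2 / 8 := by ring
  -- contradiction
  have hfin : 16 * ((E'.card : ℝ) * Mw) ^ 3 < (N:ℝ) ^ 6 / 32 := by
    have h1 : ((E'.card : ℝ) * Mw) ^ 3 < ((N:ℝ) ^ 2 / 8) ^ 3 :=
      pow_lt_pow_left₀ hprod (mul_nonneg hcardnn hMwnn) (by norm_num)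
    calc 16 * ((E'.card : ℝ) * Mw) ^ 3 < 16 * ((N:ℝ) ^ 2 / 8) ^ 3 := by linarith
      _ = (N:ℝ) ^ 6 / 32 := by ring
  have hN6 : (0:ℝ) < (N:ℝ) ^ 6 := by positivity
  linarith
end

section
/- Let N be a squarefree positive integer with at most K distinct prime divisors, and let f : (ℤ/Nℤ)² → ℂ be a nonzero function supported in a set E ⊆ (ℤ/Nℤ)² whose Fourier transform f̂ is supported in the parabola Σ = {(t, t²) : t ∈ ℤ/Nℤ}. Then |E| ≥ N² / 2^{K}. -/
open scoped BigOperators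

open Finset Complex

namespace UncertaintyParab


lemma ncard_filter_eq {α : Type*} [Fintype α] (P : α → Prop) [DecidablePred P] :
    {z | P z}.ncard = (Finset.univ.filter P).card := by
  rw [← Set.ncard_coe_finset]
  congr 1
  ext z
  simp

lemma prime_count (p : ℕ) (hp : p.Prime) [NeZero p] (s q : ZMod p) :
    ((Finset.univ.filter (fun z : ZMod p => z ^ 2 + (s - z) ^ 2 = q)).card) ≤ 2 := by
  haveI : Fact p.Prime := ⟨hp⟩
  rcases eq_or_ne p 2 with rfl | h2
  · refine (Finset.card_filter_le _ _).trans ?_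
    rw [Finset.card_univ]
    simp
  · set A := Finset.univ.filter (fun z : ZMod p => z ^ 2 + (s - z) ^ 2 = q) with hA
    rcases A.eq_empty_or_nonempty with h | ⟨z1, hz1⟩
    · rw [h]; simp
    · have hz1' : z1 ^ 2 + (s - z1) ^ 2 = q := by
        simpa [hA] using hz1
      have h2p : (2 : ZMod p) ≠ 0 := by
        intro h
        rw [show (2 : ZMod p) = ((2 : ℕ) : ZMod p) by norm_cast,
          ZMod.natCast_eq_zero_iff] at h
        exact h2 ((Nat.prime_dvd_prime_iff_eq hp Nat.prime_two).mp h)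
      have hsub : A ⊆ {z1, s - z1} := by
        intro z hz
        have hz' : z ^ 2 + (s - z) ^ 2 = q := by simpa [hA] using hz
        have key : (2 : ZMod p) * ((z - z1) * (z + z1 - s)) = 0 := by
          linear_combination hz' - hz1'
        rcases mul_eq_zero.mp key with h | h
        · exact absurd h h2p
        · rcases mul_eq_zero.mp h with h | h
          · simp [sub_eq_zero.mp h]
          · have : z = s - z1 := by linear_combination h
            simp [this]
      refine (Finset.card_le_card hsub).trans ?_
      refine (Finset.card_insert_le z1 {s - z1}).trans ?_
      simp

lemma squarefree_count : ∀ (k : ℕ) (_ : Squarefree k) (s q : ZMod k),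
    {z : ZMod k | z ^ 2 + (s - z) ^ 2 = q}.ncard ≤ 2 ^ k.primeFactors.card := by
  intro k
  induction k using Nat.strong_induction_on with
  | _ k ih =>
    intro hk s q
    haveI : NeZero k := ⟨hk.ne_zero⟩
    classical
    rw [ncard_filter_eq]
    rcases eq_or_ne k 1 with rfl | hk1
    · refine (Finset.card_filter_le _ _).trans ?_
      rw [Finset.card_univ]
      simp
    · obtain ⟨p, pp, m, rfl⟩ : ∃ p, p.Prime ∧ ∃ m, k = p * m :=
        ⟨k.minFac, Nat.minFac_prime hk1, k / k.minFac,
          ((Nat.div_mul_cancel k.minFac_dvd).symm.trans (mul_comm _ _))⟩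
      have hm0 : m ≠ 0 := by
        rintro rfl; exact hk.ne_zero (by simp)
      have hp0 : p ≠ 0 := pp.ne_zero
      have hpm : ¬ p ∣ m := by
        rintro ⟨r, rfl⟩
        exact pp.not_isUnit (hk p ⟨r, by ring⟩)
      have hcop : Nat.Coprime p m := (Nat.Prime.coprime_iff_not_dvd pp).mpr hpm
      have hmlt : m < p * m := by
        have h1 : 1 < p := pp.one_lt
        have h2 : 0 < m := Nat.pos_of_ne_zero hm0
        nlinarith
      have hmsq : Squarefree m := hk.squarefree_of_dvd (dvd_mul_left m p)
      haveI : NeZero p := ⟨hp0⟩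
      haveI : NeZero m := ⟨hm0⟩
      let χ : ZMod (p * m) ≃+* ZMod p × ZMod m := ZMod.chineseRemainder hcop
      have hcard : ((Finset.univ.filter
            (fun z : ZMod (p * m) => z ^ 2 + (s - z) ^ 2 = q)).card)
          ≤ ((Finset.univ.filter (fun a : ZMod p => a ^ 2 + ((χ s).1 - a) ^ 2 = (χ q).1)) ×ˢ
             (Finset.univ.filter (fun b : ZMod m => b ^ 2 + ((χ s).2 - b) ^ 2 = (χ q).2))).card := by
        apply Finset.card_le_card_of_injOn (fun z => χ z)
        · intro z hz
          simp only [Finset.mem_coe, Finset.mem_filter, Finset.mem_univ, true_and] at hz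
          have h := congrArg χ hz
          simp only [map_add, map_pow, map_sub] at h
          rw [Prod.ext_iff] at h
          rw [Finset.mem_coe, Finset.mem_product]
          constructor
          · simp only [Finset.mem_filter, Finset.mem_univ, true_and]
            simpa [Prod.fst_add, Prod.fst_sub, Prod.pow_fst] using h.1
          · simp only [Finset.mem_filter, Finset.mem_univ, true_and]
            simpa [Prod.snd_add, Prod.snd_sub, Prod.pow_snd] using h.2
        · exact fun a _ b _ h => χ.injective h
      rw [Finset.card_product] at hcard
      refine hcard.trans ?_
      have h1 := prime_count p pp (χ s).1 (χ q).1
      have h2 := ih m hmlt hmsq (χ s).2 (χ q).2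
      rw [ncard_filter_eq] at h2
      have hfac : (p * m).primeFactors.card = m.primeFactors.card + 1 := by
        rw [Nat.primeFactors_mul hp0 hm0, pp.primeFactors]
        rw [Finset.card_union_of_disjoint (by
          simp only [Finset.disjoint_singleton_left]
          intro h
          exact hpm (Nat.dvd_of_mem_primeFactors h))]
        simp [add_comm]
      calc _ ≤ 2 * 2 ^ m.primeFactors.card := Nat.mul_le_mul h1 h2
      _ = 2 ^ (p * m).primeFactors.card := by rw [hfac, pow_succ]; ring

lemma fiber_count (N : ℕ) [NeZero N] (hN : Squarefree N) (t1 t2 : ZMod N) :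
    (Finset.univ.filter (fun u : ZMod N × ZMod N =>
        t1 + t2 = u.1 + u.2 ∧ t1 ^ 2 + t2 ^ 2 = u.1 ^ 2 + u.2 ^ 2)).card
      ≤ 2 ^ N.primeFactors.card := by
  classical
  have key := squarefree_count N hN (t1 + t2) (t1 ^ 2 + t2 ^ 2)
  rw [ncard_filter_eq] at key
  refine le_trans ?_ key
  apply Finset.card_le_card_of_injOn (fun u => u.1)
  · intro u hu
    simp only [Finset.mem_coe, Finset.mem_filter, Finset.mem_univ, true_and] at hu ⊢
    obtain ⟨h1, h2⟩ := hu
    have hu2 : u.2 = (t1 + t2) - u.1 := by linear_combination -h1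
    rw [hu2] at h2
    exact h2.symm
  · intro u hu v hv h
    simp only [Finset.coe_filter, Set.mem_setOf_eq, Finset.mem_univ, true_and] at hu hv
    have : u.2 = v.2 := by
      have h1 := hu.1; have h2 := hv.1
      have h' : u.1 = v.1 := h
      apply add_left_cancel (a := u.1)
      rw [← h1, h', h2]
    exact Prod.ext h this


variable {N : ℕ} [NeZero N]

lemma char_neg_val (u : ZMod N) :
    Complex.exp (-2 * Real.pi * Complex.I * ((u.val : ℕ) : ℂ) / N)
      = ZMod.stdAddChar (-u) := by
  have h := ZMod.stdAddChar_coe (N := N) (-(u.val : ℤ))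
  have h2 : ((-(u.val : ℤ) : ℤ) : ZMod N) = -u := by
    push_cast
    simp [ZMod.natCast_zmod_val]
  rw [h2] at h
  rw [h]
  push_cast
  ring_nf

lemma char_conj (u : ZMod N) :
    (starRingEnd ℂ) (ZMod.stdAddChar u) = ZMod.stdAddChar (-u) := by
  rw [ZMod.stdAddChar_apply, ZMod.stdAddChar_apply, AddChar.map_neg_eq_inv,
    Circle.coe_inv_eq_conj]

lemma sum_char (t : ZMod N) :
    ∑ i : ZMod N, ZMod.stdAddChar (t * i) = if t = 0 then (N : ℂ) else 0 := by
  split_ifs with h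
  · simp only [h, zero_mul, AddChar.map_zero_eq_one, sum_const, card_univ, ZMod.card,
      nsmul_eq_mul, mul_one]
  · exact AddChar.sum_eq_zero_of_ne_one (ZMod.isPrimitive_stdAddChar N h)

lemma sum_char2 (a b : ZMod N) :
    ∑ x : ZMod N × ZMod N, ZMod.stdAddChar (a * x.1 + b * x.2)
      = if a = 0 ∧ b = 0 then (N : ℂ) ^ 2 else 0 := by
  rw [Fintype.sum_prod_type]
  simp_rw [AddChar.map_add_eq_mul]
  rw [← Finset.sum_mul_sum, sum_char a, sum_char b]
  by_cases ha : a = 0 <;> by_cases hb : b = 0 <;> simp [ha, hb, sq]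

/-- The extension of coefficients `c` along the parabola. -/
noncomputable def gfun (c : ZMod N → ℂ) (x : ZMod N × ZMod N) : ℂ :=
  ∑ t : ZMod N, c t * ZMod.stdAddChar (t * x.1 + t ^ 2 * x.2)

lemma conj_expand (c : ZMod N → ℂ) (x : ZMod N × ZMod N) :
    (starRingEnd ℂ) (gfun c x)
      = ∑ t : ZMod N, (starRingEnd ℂ) (c t) *
          ZMod.stdAddChar (-(t * x.1 + t ^ 2 * x.2)) := by
  rw [gfun, map_sum]
  exact Finset.sum_congr rfl fun t _ => by rw [map_mul, char_conj]

lemma sq_expand (c : ZMod N → ℂ) (x : ZMod N × ZMod N) :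
    gfun c x * gfun c x = ∑ a : ZMod N × ZMod N,
      (c a.1 * c a.2) *
        ZMod.stdAddChar ((a.1 + a.2) * x.1 + (a.1 ^ 2 + a.2 ^ 2) * x.2) := by
  rw [gfun, Finset.sum_mul_sum, Fintype.sum_prod_type]
  refine Finset.sum_congr rfl fun t1 _ => Finset.sum_congr rfl fun t2 _ => ?_
  rw [mul_mul_mul_comm, ← AddChar.map_add_eq_mul]
  congr 2
  ring

lemma conj_sq_expand (c : ZMod N → ℂ) (x : ZMod N × ZMod N) :
    (starRingEnd ℂ) (gfun c x) * (starRingEnd ℂ) (gfun c x)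
      = ∑ b : ZMod N × ZMod N,
        ((starRingEnd ℂ) (c b.1) * (starRingEnd ℂ) (c b.2)) *
          ZMod.stdAddChar (-((b.1 + b.2) * x.1 + (b.1 ^ 2 + b.2 ^ 2) * x.2)) := by
  rw [conj_expand, Finset.sum_mul_sum, Fintype.sum_prod_type]
  refine Finset.sum_congr rfl fun t1 _ => Finset.sum_congr rfl fun t2 _ => ?_
  rw [mul_mul_mul_comm, ← AddChar.map_add_eq_mul]
  congr 2
  ring

lemma l2 (c : ZMod N → ℂ) :
    ∑ x : ZMod N × ZMod N, gfun c x * (starRingEnd ℂ) (gfun c x)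
      = (N : ℂ) ^ 2 * ∑ t : ZMod N, c t * (starRingEnd ℂ) (c t) := by
  have hpt : ∀ x : ZMod N × ZMod N, gfun c x * (starRingEnd ℂ) (gfun c x)
      = ∑ t : ZMod N, ∑ t' : ZMod N, (c t * (starRingEnd ℂ) (c t')) *
          ZMod.stdAddChar ((t - t') * x.1 + (t ^ 2 - t' ^ 2) * x.2) := by
    intro x
    rw [conj_expand, gfun, Finset.sum_mul_sum]
    refine Finset.sum_congr rfl fun t _ => Finset.sum_congr rfl fun t' _ => ?_
    rw [mul_mul_mul_comm, ← AddChar.map_add_eq_mul]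
    congr 2
    ring
  simp_rw [hpt]
  rw [Finset.sum_comm]
  refine Eq.trans (Finset.sum_congr rfl fun t _ => Finset.sum_comm) ?_
  have hx : ∀ t t' : ZMod N,
      ∑ x : ZMod N × ZMod N, (c t * (starRingEnd ℂ) (c t')) *
        ZMod.stdAddChar ((t - t') * x.1 + (t ^ 2 - t' ^ 2) * x.2)
      = (c t * (starRingEnd ℂ) (c t')) *
          (if t - t' = 0 ∧ t ^ 2 - t' ^ 2 = 0 then (N : ℂ) ^ 2 else 0) := by
    intro t t'
    rw [← Finset.mul_sum, sum_char2]
  simp_rw [hx]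
  have hiff : ∀ t t' : ZMod N, (t - t' = 0 ∧ t ^ 2 - t' ^ 2 = 0) ↔ t' = t := by
    intro t t'
    constructor
    · intro h; exact (sub_eq_zero.mp h.1).symm
    · rintro rfl; simp
  simp_rw [hiff, mul_ite, mul_zero, Finset.sum_ite_eq', Finset.mem_univ, if_true]
  rw [← Finset.sum_mul]
  ring

lemma l4 (c : ZMod N → ℂ) :
    ∑ x : ZMod N × ZMod N, (gfun c x * (starRingEnd ℂ) (gfun c x)) ^ 2
      = (N : ℂ) ^ 2 * ∑ a : ZMod N × ZMod N, ∑ b : ZMod N × ZMod N,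
          (if a.1 + a.2 = b.1 + b.2 ∧ a.1 ^ 2 + a.2 ^ 2 = b.1 ^ 2 + b.2 ^ 2
            then (c a.1 * c a.2) * ((starRingEnd ℂ) (c b.1) * (starRingEnd ℂ) (c b.2))
            else 0) := by
  have hpt : ∀ x : ZMod N × ZMod N, (gfun c x * (starRingEnd ℂ) (gfun c x)) ^ 2
      = ∑ a : ZMod N × ZMod N, ∑ b : ZMod N × ZMod N,
          ((c a.1 * c a.2) * ((starRingEnd ℂ) (c b.1) * (starRingEnd ℂ) (c b.2))) *
            ZMod.stdAddChar ((a.1 + a.2 - (b.1 + b.2)) * x.1 +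
              (a.1 ^ 2 + a.2 ^ 2 - (b.1 ^ 2 + b.2 ^ 2)) * x.2) := by
    intro x
    have h0 : (gfun c x * (starRingEnd ℂ) (gfun c x)) ^ 2
        = (gfun c x * gfun c x) *
          ((starRingEnd ℂ) (gfun c x) * (starRingEnd ℂ) (gfun c x)) := by ring
    rw [h0, sq_expand, conj_sq_expand, Finset.sum_mul_sum]
    refine Finset.sum_congr rfl fun a _ => Finset.sum_congr rfl fun b _ => ?_
    rw [mul_mul_mul_comm, ← AddChar.map_add_eq_mul]
    congr 2
    ring
  simp_rw [hpt]
  rw [Finset.sum_comm]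
  refine Eq.trans (Finset.sum_congr rfl fun a _ => Finset.sum_comm) ?_
  have hx : ∀ a b : ZMod N × ZMod N,
      ∑ x : ZMod N × ZMod N,
        ((c a.1 * c a.2) * ((starRingEnd ℂ) (c b.1) * (starRingEnd ℂ) (c b.2))) *
          ZMod.stdAddChar ((a.1 + a.2 - (b.1 + b.2)) * x.1 +
            (a.1 ^ 2 + a.2 ^ 2 - (b.1 ^ 2 + b.2 ^ 2)) * x.2)
      = ((c a.1 * c a.2) * ((starRingEnd ℂ) (c b.1) * (starRingEnd ℂ) (c b.2))) *
          (if a.1 + a.2 - (b.1 + b.2) = 0 ∧ a.1 ^ 2 + a.2 ^ 2 - (b.1 ^ 2 + b.2 ^ 2) = 0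
            then (N : ℂ) ^ 2 else 0) := by
    intro a b
    rw [← Finset.mul_sum, sum_char2]
  simp_rw [hx]
  have hiff : ∀ a b : ZMod N × ZMod N,
      (a.1 + a.2 - (b.1 + b.2) = 0 ∧ a.1 ^ 2 + a.2 ^ 2 - (b.1 ^ 2 + b.2 ^ 2) = 0)
        ↔ (a.1 + a.2 = b.1 + b.2 ∧ a.1 ^ 2 + a.2 ^ 2 = b.1 ^ 2 + b.2 ^ 2) := by
    intro a b
    rw [sub_eq_zero, sub_eq_zero]
  simp_rw [hiff, mul_ite, mul_zero]
  rw [Finset.mul_sum]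
  refine Finset.sum_congr rfl fun a _ => ?_
  rw [Finset.mul_sum]
  refine Finset.sum_congr rfl fun b _ => ?_
  split_ifs with h
  · ring
  · rw [mul_zero]

lemma rep (f : ZMod N × ZMod N → ℂ)
    (hPar : ∀ m : ZMod N × ZMod N, m ∉ parabola N → dft N f m = 0)
    (x : ZMod N × ZMod N) :
    f x = ∑ t : ZMod N, ((N : ℂ)⁻¹ * dft N f (t, t ^ 2)) *
      ZMod.stdAddChar (t * x.1 + t ^ 2 * x.2) := by
  classical
  have hN : (N : ℂ) ≠ 0 := Nat.cast_ne_zero.mpr (NeZero.ne N)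
  have h1 : ∑ t : ZMod N, dft N f (t, t ^ 2) * ZMod.stdAddChar (t * x.1 + t ^ 2 * x.2)
      = ∑ m : ZMod N × ZMod N, dft N f m * ZMod.stdAddChar (m.1 * x.1 + m.2 * x.2) := by
    rw [← Finset.sum_subset (Finset.subset_univ (parabola N))
      (fun m _ hm => by rw [hPar m hm, zero_mul])]
    rw [parabola, Finset.sum_image (fun a _ b _ h => congrArg Prod.fst h)]
  have step1 : ∀ m : ZMod N × ZMod N,
      dft N f m * ZMod.stdAddChar (m.1 * x.1 + m.2 * x.2)
      = (N : ℂ)⁻¹ * ∑ y : ZMod N × ZMod N,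
          f y * ZMod.stdAddChar ((x.1 - y.1) * m.1 + (x.2 - y.2) * m.2) := by
    intro m
    rw [dft, mul_assoc, Finset.sum_mul]
    congr 1
    refine Finset.sum_congr rfl fun y _ => ?_
    rw [char_neg_val, mul_assoc, ← AddChar.map_add_eq_mul]
    congr 2
    ring
  have h2 : ∑ m : ZMod N × ZMod N, dft N f m * ZMod.stdAddChar (m.1 * x.1 + m.2 * x.2)
      = (N : ℂ) * f x := by
    simp_rw [step1]
    rw [← Finset.mul_sum, Finset.sum_comm]
    have hy : ∀ y : ZMod N × ZMod N,
        ∑ m : ZMod N × ZMod N,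
          f y * ZMod.stdAddChar ((x.1 - y.1) * m.1 + (x.2 - y.2) * m.2)
        = f y * (if x.1 - y.1 = 0 ∧ x.2 - y.2 = 0 then (N : ℂ) ^ 2 else 0) := by
      intro y
      rw [← Finset.mul_sum, sum_char2]
    simp_rw [hy]
    have hiff : ∀ y : ZMod N × ZMod N, (x.1 - y.1 = 0 ∧ x.2 - y.2 = 0) ↔ y = x := by
      intro y
      rw [sub_eq_zero, sub_eq_zero, Prod.ext_iff]
      exact ⟨fun h => ⟨h.1.symm, h.2.symm⟩, fun h => ⟨h.1.symm, h.2.symm⟩⟩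
    simp_rw [hiff, mul_ite, mul_zero, Finset.sum_ite_eq', Finset.mem_univ, if_true]
    field_simp
  calc f x = (N : ℂ)⁻¹ * ((N : ℂ) * f x) := by field_simp
  _ = (N : ℂ)⁻¹ * ∑ t : ZMod N, dft N f (t, t ^ 2) *
        ZMod.stdAddChar (t * x.1 + t ^ 2 * x.2) := by rw [h1, h2]
  _ = ∑ t : ZMod N, ((N : ℂ)⁻¹ * dft N f (t, t ^ 2)) *
        ZMod.stdAddChar (t * x.1 + t ^ 2 * x.2) := by
      rw [Finset.mul_sum]
      exact Finset.sum_congr rfl fun t _ => by ring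

lemma norm4 (z1 z2 z3 z4 : ℂ) :
    ‖(z1 * z2) * ((starRingEnd ℂ) z3 * (starRingEnd ℂ) z4)‖
      ≤ ((‖z1‖ * ‖z2‖) ^ 2 + (‖z3‖ * ‖z4‖) ^ 2) / 2 := by
  rw [norm_mul, norm_mul, norm_mul, RCLike.norm_conj, RCLike.norm_conj]
  nlinarith [sq_nonneg (‖z1‖ * ‖z2‖ - ‖z3‖ * ‖z4‖), norm_nonneg z1, norm_nonneg z2,
    norm_nonneg z3, norm_nonneg z4, mul_nonneg (norm_nonneg z1) (norm_nonneg z2),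
    mul_nonneg (norm_nonneg z3) (norm_nonneg z4)]

lemma mul_conj_eq (z : ℂ) : z * (starRingEnd ℂ) z = ((‖z‖ ^ 2 : ℝ) : ℂ) := by
  rw [Complex.mul_conj]
  norm_cast
  rw [Complex.normSq_eq_norm_sq]

end UncertaintyParab



open UncertaintyParab Finset

theorem uncertainty_bounded_factors (K : ℕ) (N : ℕ) [NeZero N] (hN : Squarefree N)
    (hω : N.primeFactors.card ≤ K)
    (f : ZMod N × ZMod N → ℂ) (E : Set (ZMod N × ZMod N))
    (hf : f ≠ 0)
    (hE : ∀ x : ZMod N × ZMod N, x ∉ E → f x = 0)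
    (hPar : ∀ m : ZMod N × ZMod N, m ∉ parabola N → dft N f m = 0) :
    (E.ncard : ℝ) ≥ (N : ℝ) ^ 2 / 2 ^ K := by
  classical
  set c : ZMod N → ℂ := fun t => (N : ℂ)⁻¹ * dft N f (t, t ^ 2) with hc
  have hrep : ∀ x, f x = gfun c x := fun x => rep f hPar x
  set S : ℝ := ∑ t : ZMod N, ‖c t‖ ^ 2 with hS
  have hS0 : 0 < S := by
    have hne : ∃ t, c t ≠ 0 := by
      by_contra h
      push_neg at h
      apply hf
      funext x
      rw [hrep x, gfun]
      simp [h]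
    obtain ⟨t0, ht0⟩ := hne
    have h1 : (0 : ℝ) < ‖c t0‖ ^ 2 := pow_pos (norm_pos_iff.mpr ht0) 2
    exact lt_of_lt_of_le h1 (Finset.single_le_sum
      (f := fun t => ‖c t‖ ^ 2) (fun t _ => by positivity) (Finset.mem_univ t0))
  have hNpos : (0 : ℝ) < (N : ℝ) := by
    exact_mod_cast Nat.pos_of_ne_zero (NeZero.ne N)
  -- L² identity
  have hT2 : ∑ x : ZMod N × ZMod N, ‖f x‖ ^ 2 = (N : ℝ) ^ 2 * S := by
    rw [hS]
    have hcx := l2 (N := N) c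
    simp_rw [mul_conj_eq] at hcx
    simp_rw [hrep]
    exact_mod_cast hcx
  -- L⁴ bound
  have hT4 : ∑ x : ZMod N × ZMod N, ‖f x‖ ^ 4 ≤ 2 ^ K * ((N : ℝ) ^ 2 * S ^ 2) := by
    have hW := l4 (N := N) c
    set W : ℂ := ∑ a : ZMod N × ZMod N, ∑ b : ZMod N × ZMod N,
        (if a.1 + a.2 = b.1 + b.2 ∧ a.1 ^ 2 + a.2 ^ 2 = b.1 ^ 2 + b.2 ^ 2
          then (c a.1 * c a.2) * ((starRingEnd ℂ) (c b.1) * (starRingEnd ℂ) (c b.2))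
          else 0) with hWdef
    have h4c : ((∑ x : ZMod N × ZMod N, ‖f x‖ ^ 4 : ℝ) : ℂ) = (N : ℂ) ^ 2 * W := by
      rw [hWdef, ← hW]
      push_cast
      simp_rw [hrep]
      refine Finset.sum_congr rfl fun x _ => ?_
      rw [mul_conj_eq]
      push_cast
      ring
    have hT4norm : ∑ x : ZMod N × ZMod N, ‖f x‖ ^ 4 = (N : ℝ) ^ 2 * ‖W‖ := by
      have hnn : 0 ≤ ∑ x : ZMod N × ZMod N, ‖f x‖ ^ 4 :=
        Finset.sum_nonneg fun x _ => by positivity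
      calc ∑ x : ZMod N × ZMod N, ‖f x‖ ^ 4
          = ‖((∑ x : ZMod N × ZMod N, ‖f x‖ ^ 4 : ℝ) : ℂ)‖ := by
            rw [Complex.norm_real]
            exact (_root_.abs_of_nonneg hnn).symm
        _ = ‖(N : ℂ) ^ 2 * W‖ := by rw [h4c]
        _ = (N : ℝ) ^ 2 * ‖W‖ := by
            rw [norm_mul, norm_pow]
            norm_num
    set α : ZMod N × ZMod N → ℝ := fun a => (‖c a.1‖ * ‖c a.2‖) ^ 2 with hα
    have hWle : ‖W‖ ≤ ∑ a : ZMod N × ZMod N, ∑ b : ZMod N × ZMod N,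
        (if a.1 + a.2 = b.1 + b.2 ∧ a.1 ^ 2 + a.2 ^ 2 = b.1 ^ 2 + b.2 ^ 2
          then (α a + α b) / 2 else 0) := by
      rw [hWdef]
      refine (norm_sum_le _ _).trans (Finset.sum_le_sum fun a _ => ?_)
      refine (norm_sum_le _ _).trans (Finset.sum_le_sum fun b _ => ?_)
      split_ifs with h
      · simp only [hα]
        exact norm4 _ _ _ _
      · simp
    have hsym : ∑ a : ZMod N × ZMod N, ∑ b : ZMod N × ZMod N,
        (if a.1 + a.2 = b.1 + b.2 ∧ a.1 ^ 2 + a.2 ^ 2 = b.1 ^ 2 + b.2 ^ 2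
          then α b else 0)
        = ∑ a : ZMod N × ZMod N, ∑ b : ZMod N × ZMod N,
        (if a.1 + a.2 = b.1 + b.2 ∧ a.1 ^ 2 + a.2 ^ 2 = b.1 ^ 2 + b.2 ^ 2
          then α a else 0) := by
      rw [Finset.sum_comm]
      refine Finset.sum_congr rfl fun b _ => Finset.sum_congr rfl fun a _ => ?_
      exact if_congr ⟨fun h => ⟨h.1.symm, h.2.symm⟩, fun h => ⟨h.1.symm, h.2.symm⟩⟩ rfl rfl
    have hhalf : ∑ a : ZMod N × ZMod N, ∑ b : ZMod N × ZMod N,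
        (if a.1 + a.2 = b.1 + b.2 ∧ a.1 ^ 2 + a.2 ^ 2 = b.1 ^ 2 + b.2 ^ 2
          then (α a + α b) / 2 else 0)
        = ∑ a : ZMod N × ZMod N, ∑ b : ZMod N × ZMod N,
        (if a.1 + a.2 = b.1 + b.2 ∧ a.1 ^ 2 + a.2 ^ 2 = b.1 ^ 2 + b.2 ^ 2
          then α a else 0) := by
      have hsplit : ∀ a b : ZMod N × ZMod N,
          (if a.1 + a.2 = b.1 + b.2 ∧ a.1 ^ 2 + a.2 ^ 2 = b.1 ^ 2 + b.2 ^ 2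
            then (α a + α b) / 2 else 0)
          = (if a.1 + a.2 = b.1 + b.2 ∧ a.1 ^ 2 + a.2 ^ 2 = b.1 ^ 2 + b.2 ^ 2
              then α a else 0) / 2
            + (if a.1 + a.2 = b.1 + b.2 ∧ a.1 ^ 2 + a.2 ^ 2 = b.1 ^ 2 + b.2 ^ 2
              then α b else 0) / 2 := by
        intro a b
        split_ifs with h <;> ring
      simp_rw [hsplit, Finset.sum_add_distrib, ← Finset.sum_div]
      rw [hsym]
      ring
    have hfiber : ∑ a : ZMod N × ZMod N, ∑ b : ZMod N × ZMod N,
        (if a.1 + a.2 = b.1 + b.2 ∧ a.1 ^ 2 + a.2 ^ 2 = b.1 ^ 2 + b.2 ^ 2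
          then α a else 0) ≤ 2 ^ K * S ^ 2 := by
      have hstep : ∀ a : ZMod N × ZMod N,
          ∑ b : ZMod N × ZMod N,
            (if a.1 + a.2 = b.1 + b.2 ∧ a.1 ^ 2 + a.2 ^ 2 = b.1 ^ 2 + b.2 ^ 2
              then α a else 0) ≤ 2 ^ K * α a := by
        intro a
        rw [← Finset.sum_filter]
        rw [Finset.sum_const, nsmul_eq_mul]
        have hcount := fiber_count N hN a.1 a.2
        have hcK : ((Finset.univ.filter (fun u : ZMod N × ZMod N =>
            a.1 + a.2 = u.1 + u.2 ∧ a.1 ^ 2 + a.2 ^ 2 = u.1 ^ 2 + u.2 ^ 2)).card : ℝ)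
            ≤ 2 ^ K := by
          have h2 : (2 : ℕ) ^ N.primeFactors.card ≤ 2 ^ K :=
            Nat.pow_le_pow_right (by norm_num) hω
          exact_mod_cast hcount.trans h2
        have hα0 : 0 ≤ α a := by rw [hα]; positivity
        exact mul_le_mul_of_nonneg_right hcK hα0
      refine (Finset.sum_le_sum fun a _ => hstep a).trans ?_
      rw [← Finset.mul_sum]
      have hsum : ∑ a : ZMod N × ZMod N, α a = S ^ 2 := by
        rw [Fintype.sum_prod_type]
        simp_rw [hα, mul_pow]
        rw [← Finset.sum_mul_sum, hS, sq]
      rw [hsum]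
    calc ∑ x : ZMod N × ZMod N, ‖f x‖ ^ 4 = (N : ℝ) ^ 2 * ‖W‖ := hT4norm
    _ ≤ (N : ℝ) ^ 2 * (2 ^ K * S ^ 2) := by
        refine mul_le_mul_of_nonneg_left ?_ (by positivity)
        exact hWle.trans (le_of_eq hhalf |>.trans hfiber)
    _ = 2 ^ K * ((N : ℝ) ^ 2 * S ^ 2) := by ring
  -- support set
  set D : Finset (ZMod N × ZMod N) := Finset.univ.filter (fun x => f x ≠ 0) with hD
  have hD_le : (D.card : ℝ) ≤ (E.ncard : ℝ) := by
    have hsub : ↑D ⊆ E := by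
      intro x hx
      simp only [hD, Finset.coe_filter, Set.mem_setOf_eq, Finset.mem_univ, true_and] at hx
      by_contra h
      exact hx (hE x h)
    have h1 := Set.ncard_le_ncard hsub (Set.toFinite E)
    rw [Set.ncard_coe_finset] at h1
    exact_mod_cast h1
  -- Cauchy–Schwarz
  have hCS : (∑ x : ZMod N × ZMod N, ‖f x‖ ^ 2) ^ 2
      ≤ (D.card : ℝ) * ∑ x : ZMod N × ZMod N, ‖f x‖ ^ 4 := by
    have hzero : ∀ x : ZMod N × ZMod N, x ∉ D → f x = 0 := by
      intro x hx
      by_contra hne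
      exact hx (by simp [hD, hne])
    have h2 : ∑ x : ZMod N × ZMod N, ‖f x‖ ^ 2 = ∑ x ∈ D, ‖f x‖ ^ 2 := by
      refine (Finset.sum_subset (Finset.subset_univ D) ?_).symm
      intro x _ hx
      rw [hzero x hx]
      simp
    have h4 : ∑ x : ZMod N × ZMod N, ‖f x‖ ^ 4 = ∑ x ∈ D, ‖f x‖ ^ 4 := by
      refine (Finset.sum_subset (Finset.subset_univ D) ?_).symm
      intro x _ hx
      rw [hzero x hx]
      simp
    rw [h2, h4]
    calc (∑ x ∈ D, ‖f x‖ ^ 2) ^ 2 ≤ (D.card : ℝ) * ∑ x ∈ D, (‖f x‖ ^ 2) ^ 2 :=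
      sq_sum_le_card_mul_sum_sq
    _ = (D.card : ℝ) * ∑ x ∈ D, ‖f x‖ ^ 4 := by
        congr 1
        exact Finset.sum_congr rfl fun x _ => by ring
  -- combine
  have key : (N : ℝ) ^ 2 ≤ (D.card : ℝ) * 2 ^ K := by
    have h1 : ((N : ℝ) ^ 2 * S) ^ 2 ≤ (D.card : ℝ) * (2 ^ K * ((N : ℝ) ^ 2 * S ^ 2)) := by
      rw [← hT2]
      exact hCS.trans (mul_le_mul_of_nonneg_left hT4 (by positivity))
    have h2 : (N : ℝ) ^ 2 * ((N : ℝ) ^ 2 * S ^ 2)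
        ≤ ((D.card : ℝ) * 2 ^ K) * ((N : ℝ) ^ 2 * S ^ 2) := by nlinarith
    exact le_of_mul_le_mul_right h2 (by positivity)
  rw [ge_iff_le, div_le_iff₀ (by positivity)]
  calc (N : ℝ) ^ 2 ≤ (D.card : ℝ) * 2 ^ K := key
  _ ≤ (E.ncard : ℝ) * 2 ^ K := by
      exact mul_le_mul_of_nonneg_right hD_le (by positivity)
end
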